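/- arXiv:2208.09927 — 2 statements merged into one kernel-verified Lean document; each statement's English description precedes it below -/
import Mathlib

section
/- The binary caterpillar tree of height h with pendant edge lengths ℓ_j' and spine edge lengths ℓ_j is trace-balanced if and only if ℓ_j' = Σ_{k=j}^{h−1} (h−k) ℓ_k for j = 1, …, h−1; in this case the eigenvalues of its covariance matrix are ℓ_0' ≥ ℓ_1' ≥ ⋯ ≥ ℓ_{h−1}', where ℓ_0' := Σ_{k=0}^{h−1} (h−k) ℓ_k, each counted with multiplicity. -/
open Finset

noncomputable section
open scoped Classical

/-- A finite rooted tree on vertices `Fin n`, given by a parent function: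
every vertex reaches the root by iterating `parent`, and the root is its own parent. -/
structure RTree where
  n : ℕ
  npos : 0 < n
  root : Fin n
  parent : Fin n → Fin n
  parent_root : parent root = root
  reach : ∀ v, ∃ k, parent^[k] v = root

namespace RTree

variable (T : RTree)

/-- `u` is an ancestor of `v` (every vertex is an ancestor of itself). -/
def Anc (u v : Fin T.n) : Prop := ∃ k, T.parent^[k] v = u

/-- The children of a vertex. -/
def children (v : Fin T.n) : Finset (Fin T.n) :=
  Finset.univ.filter fun u => T.parent u = v ∧ u ≠ T.root

def IsLeaf (v : Fin T.n) : Prop := T.children v = ∅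

/-- The leaf set of the tree. -/
def leaves : Finset (Fin T.n) := Finset.univ.filter fun v => T.IsLeaf v

/-- The internal (non-leaf) vertices; the root is internal. -/
def internal : Finset (Fin T.n) := Finset.univ.filter fun v => ¬ T.IsLeaf v

/-- `L(v)`: the leaves descending from `v`. -/
def Ldesc (v : Fin T.n) : Finset (Fin T.n) := T.leaves.filter fun i => T.Anc v i

/-- Depth of a vertex: number of edges to the root. -/
def depth (v : Fin T.n) : ℕ := Nat.find (T.reach v)

/-- Number of vertices of the subtree rooted at `v`. -/
def subtreeSize (v : Fin T.n) : ℕ := (Finset.univ.filter fun u => T.Anc v u).card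

/-- ORB-tree: the root has exactly one child and is not a leaf, and every other
internal vertex has exactly two children (so every vertex has degree 1 or 3). -/
def IsORB : Prop :=
  ¬ T.IsLeaf T.root ∧ (T.children T.root).card = 1 ∧
  ∀ v, ¬ T.IsLeaf v → v ≠ T.root → (T.children v).card = 2

/-- The type of leaves. -/
abbrev Leaf := {i // i ∈ T.leaves}

/-- `δ_e` for the edge `e` above vertex `v`: the indicator vector of the leaves
descending from that edge. -/
def delta (v : Fin T.n) : T.Leaf → ℝ := fun i => if T.Anc v i.1 then 1 else 0

/-- The covariance matrix of the tree with branch lengths `ℓ`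
(`ℓ v` is the length of the edge joining `v` to its parent):
`S = ∑_{e ∈ E} ℓ(e) δ_e δ_e'`.  Equivalently `S(i,j) = ∑_{e ∈ [i∧j,∘]} ℓ(e)`. -/
def cov (ℓ : Fin T.n → ℝ) : Matrix T.Leaf T.Leaf ℝ :=
  ∑ v ∈ Finset.univ.filter (fun v => v ≠ T.root),
    ℓ v • Matrix.vecMulVec (T.delta v) (T.delta v)

/-- The trace branch length `ℓ*(i,v) = ∑_{e ∈ [i,v]} |L(e)| ℓ(e)`; the edge above `w`
lies on the path between `i` and `v` iff exactly one of `i`, `v` descends from `w`. -/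
def lstar (ℓ : Fin T.n → ℝ) (i v : Fin T.n) : ℝ :=
  ∑ w ∈ Finset.univ.filter (fun w => w ≠ T.root ∧
      ((T.Anc w i ∧ ¬ T.Anc w v) ∨ (T.Anc w v ∧ ¬ T.Anc w i))),
    ((T.Ldesc w).card : ℝ) * ℓ w

/-- `φ` is the family of Haar-like wavelets of `T`, indexed by internal vertices. -/
def IsHaarLike (φ : Fin T.n → T.Leaf → ℝ) : Prop :=
  (∀ i, φ T.root i = 1 / Real.sqrt ((T.leaves.card : ℝ))) ∧
  ∀ v ∈ T.internal, v ≠ T.root → ∃ c₀ c₁, c₀ ≠ c₁ ∧ T.children v = {c₀, c₁} ∧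
    ∀ i : T.Leaf, φ v i =
      if i.1 ∈ T.Ldesc c₀ then
        Real.sqrt (((T.Ldesc c₁).card : ℝ) / (((T.Ldesc c₀).card : ℝ) * ((T.Ldesc v).card : ℝ)))
      else if i.1 ∈ T.Ldesc c₁ then
        - Real.sqrt (((T.Ldesc c₀).card : ℝ) / (((T.Ldesc c₁).card : ℝ) * ((T.Ldesc v).card : ℝ)))
      else 0

/-- `T` is trace-balanced (at every non-root internal vertex). -/
def TraceBalanced (ℓ : Fin T.n → ℝ) : Prop :=
  ∀ v ∈ T.internal, v ≠ T.root → ∀ i ∈ T.Ldesc v, ∀ j ∈ T.Ldesc v,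
    T.lstar ℓ i v = T.lstar ℓ j v

end RTree


open Polynomial

namespace CatAux

variable (h : ℕ) (ℓseq : ℕ → ℝ)

def sP (m : ℕ) : ℝ := ∑ k ∈ Finset.range m, ℓseq k

def AP (j m : ℕ) : ℝ := ∑ k ∈ Finset.Ico j m, ((h : ℝ) - (k : ℝ)) * ℓseq k

lemma sP_succ (m : ℕ) : sP ℓseq (m + 1) = sP ℓseq m + ℓseq m := Finset.sum_range_succ _ _

lemma AP_bot {j m : ℕ} (hjm : j < m) :
    AP h ℓseq j m = ((h : ℝ) - j) * ℓseq j + AP h ℓseq (j + 1) m :=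
  Finset.sum_eq_sum_Ico_succ_bot hjm _

lemma AP_glue {i j m : ℕ} (hij : i ≤ j) (hjm : j ≤ m) :
    AP h ℓseq i j + AP h ℓseq j m = AP h ℓseq i m :=
  Finset.sum_Ico_consecutive _ hij hjm

lemma key (c : ℕ) : ∀ a, c ≤ a → a < h →
    (∑ b ∈ Finset.Ico c a, sP ℓseq (b + 1)) + ((h : ℝ) - a) * sP ℓseq (a + 1)
      + AP h ℓseq (a + 1) h
    = ((h : ℝ) - c) * sP ℓseq c + AP h ℓseq c h := by
  intro a
  induction a with
  | zero =>
    intro hc ha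
    interval_cases c
    simp only [Finset.Ico_self, Finset.sum_empty, Nat.cast_zero]
    rw [sP_succ, AP_bot h ℓseq ha]
    push_cast
    ring
  | succ a ih =>
    intro hc ha'
    have ha : a < h := by omega
    rcases Nat.lt_or_ge c (a+1) with hlt | hge
    · have hca : c ≤ a := by omega
      have hIH := ih hca ha
      rw [Finset.sum_Ico_succ_top hca]
      rw [sP_succ ℓseq (a+1)]
      rw [AP_bot h ℓseq (show a+1 < h by omega)] at hIH
      push_cast
      push_cast at hIH
      linear_combination hIH
    · have hceq : c = a + 1 := by omega
      subst hceq
      simp only [Finset.Ico_self, Finset.sum_empty, zero_add]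
      rw [sP_succ, AP_bot h ℓseq (show a+1 < h by omega)]
      push_cast
      ring

def Me (a b : ℕ) : ℝ :=
  sP ℓseq (min a b + 1) + if a = b then AP h ℓseq (a + 1) h else 0

def Pe (a j : ℕ) : ℝ :=
  if j = 0 then 1 else if a + 1 = j then 1 else
    if j ≤ a then -(1 / ((h : ℝ) - j)) else 0

def Qe (m a : ℕ) : ℝ :=
  if m = 0 then 1 / (h : ℝ) else if m ≤ a then -(1 / ((h : ℝ) - m + 1)) else
    if m = a + 1 then ((h : ℝ) - m) / ((h : ℝ) - m + 1) else 0

def Mmat : Matrix (Fin h) (Fin h) ℝ := fun a b => Me h ℓseq a.1 b.1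
def Pmat : Matrix (Fin h) (Fin h) ℝ := fun a j => Pe h a.1 j.1
def Qmat : Matrix (Fin h) (Fin h) ℝ := fun m a => Qe h m.1 a.1
def Dmat : Matrix (Fin h) (Fin h) ℝ := Matrix.diagonal fun j => AP h ℓseq j.1 h

/-- sum over `Ico t h` of a constant -/
lemma sum_const_Ico (t : ℕ) (ht : t ≤ h) (c : ℝ) :
    ∑ _x ∈ Finset.Ico t h, c = ((h : ℝ) - t) * c := by
  rw [Finset.sum_const, Nat.card_Ico, nsmul_eq_mul, Nat.cast_sub ht]

lemma MP_eq_PD : Mmat h ℓseq * Pmat h = Pmat h * Dmat h ℓseq := by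
  ext a c
  rw [Matrix.mul_apply, Dmat, Matrix.mul_diagonal]
  show (∑ b : Fin h, Me h ℓseq a.1 b.1 * Pe h b.1 c.1) = Pe h a.1 c.1 * AP h ℓseq c.1 h
  rw [Fin.sum_univ_eq_sum_range (fun x => Me h ℓseq a.1 x * Pe h x c.1)]
  have hah : a.1 < h := a.2
  have hch : c.1 < h := c.2
  have hsplit : ∀ x, Me h ℓseq a.1 x * Pe h x c.1
      = sP ℓseq (min a.1 x + 1) * Pe h x c.1
        + (if a.1 = x then AP h ℓseq (a.1 + 1) h * Pe h x c.1 else 0) := by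
    intro x
    simp only [Me]
    by_cases hax : a.1 = x <;> simp [hax] <;> ring
  simp only [hsplit]
  rw [Finset.sum_add_distrib, Finset.sum_ite_eq (Finset.range h) a.1
      (fun x => AP h ℓseq (a.1 + 1) h * Pe h x c.1), if_pos (Finset.mem_range.2 hah)]
  rcases Nat.eq_zero_or_pos c.1 with hc0 | hc1
  · -- column 0 : eigenvalue AP 0 h
    simp only [hc0]
    have hPe1 : ∀ x, Pe h x 0 = 1 := fun x => by simp [Pe]
    simp only [hPe1, mul_one]
    have h1 : ∑ x ∈ Finset.range h, sP ℓseq (min a.1 x + 1)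
        = (∑ x ∈ Finset.Ico 0 a.1, sP ℓseq (x + 1)) + ((h:ℝ) - a.1) * sP ℓseq (a.1 + 1) := by
      rw [Finset.range_eq_Ico, ← Finset.sum_Ico_consecutive _ (Nat.zero_le a.1) (le_of_lt hah)]
      congr 1
      · exact Finset.sum_congr rfl fun x hx => by
          rw [Nat.min_eq_right (le_of_lt (Finset.mem_Ico.1 hx).2)]
      · rw [← sum_const_Ico h a.1 (le_of_lt hah) (sP ℓseq (a.1+1))]
        exact Finset.sum_congr rfl fun x hx => by
          rw [Nat.min_eq_left (Finset.mem_Ico.1 hx).1]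
    rw [h1]
    have hk := key h ℓseq 0 a.1 (Nat.zero_le _) hah
    simp only [Nat.cast_zero, sub_zero] at hk
    have hs0 : sP ℓseq 0 = 0 := by simp [sP]
    rw [hs0] at hk
    linear_combination hk
  · -- column c.1 ≥ 1
    have hcc0 : c.1 ≠ 0 := by omega
    have hne : ((h : ℝ) - c.1) ≠ 0 := by
      have : (c.1 : ℝ) < h := by exact_mod_cast hch
      linarith
    have hPe : ∀ x, Pe h x c.1 = if x + 1 = c.1 then 1 else
        if c.1 ≤ x then -(1 / ((h : ℝ) - c.1)) else 0 := fun x => by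
      simp only [Pe, if_neg hcc0]
    have h2 : ∑ x ∈ Finset.range h, sP ℓseq (min a.1 x + 1) * Pe h x c.1
        = sP ℓseq (min a.1 (c.1 - 1) + 1)
          + (∑ x ∈ Finset.Ico c.1 h, sP ℓseq (min a.1 x + 1)) * (-(1 / ((h : ℝ) - c.1))) := by
      rw [Finset.range_eq_Ico, ← Finset.sum_Ico_consecutive _ (Nat.zero_le c.1) (le_of_lt hch)]
      congr 1
      · calc ∑ x ∈ Finset.Ico 0 c.1, sP ℓseq (min a.1 x + 1) * Pe h x c.1
            = sP ℓseq (min a.1 (c.1-1) + 1) * Pe h (c.1-1) c.1 :=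
              Finset.sum_eq_single_of_mem _
                (Finset.mem_Ico.2 ⟨Nat.zero_le _, by omega⟩)
                (fun x hx hxne => by
                  simp only [Finset.mem_Ico] at hx
                  rw [hPe, if_neg (by omega), if_neg (by omega), mul_zero])
          _ = sP ℓseq (min a.1 (c.1-1) + 1) := by
              rw [hPe, if_pos (by omega), mul_one]
      · calc ∑ x ∈ Finset.Ico c.1 h, sP ℓseq (min a.1 x + 1) * Pe h x c.1
            = ∑ x ∈ Finset.Ico c.1 h, sP ℓseq (min a.1 x + 1) * (-(1 / ((h : ℝ) - c.1))) :=
              Finset.sum_congr rfl fun x hx => by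
                simp only [Finset.mem_Ico] at hx
                rw [hPe, if_neg (by omega), if_pos hx.1]
          _ = _ := (Finset.sum_mul _ _ _).symm
    rw [h2]
    rcases Nat.lt_or_ge a.1 c.1 with halt | hage
    · have hmin1 : min a.1 (c.1 - 1) = a.1 := by omega
      have hconst : ∑ x ∈ Finset.Ico c.1 h, sP ℓseq (min a.1 x + 1)
          = ((h:ℝ) - c.1) * sP ℓseq (a.1 + 1) := by
        rw [← sum_const_Ico h c.1 (le_of_lt hch) (sP ℓseq (a.1+1))]
        exact Finset.sum_congr rfl fun x hx => by
          rw [Nat.min_eq_left (by have := (Finset.mem_Ico.1 hx).1; omega)]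
      rw [hmin1, hconst]
      rcases Nat.lt_or_ge (a.1 + 1) c.1 with hlt2 | hge2
      · rw [hPe, if_neg (by omega), if_neg (by omega)]
        field_simp
        ring
      · have heq : a.1 + 1 = c.1 := by omega
        rw [hPe, if_pos heq, heq]
        field_simp
        ring
    · have hmin1 : min a.1 (c.1 - 1) + 1 = c.1 := by omega
      have hsum : ∑ x ∈ Finset.Ico c.1 h, sP ℓseq (min a.1 x + 1)
          = (∑ x ∈ Finset.Ico c.1 a.1, sP ℓseq (x + 1)) + ((h:ℝ) - a.1) * sP ℓseq (a.1 + 1) := by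
        rw [← Finset.sum_Ico_consecutive _ hage (le_of_lt hah)]
        congr 1
        · exact Finset.sum_congr rfl fun x hx => by
            rw [Nat.min_eq_right (le_of_lt (Finset.mem_Ico.1 hx).2)]
        · rw [← sum_const_Ico h a.1 (le_of_lt hah) (sP ℓseq (a.1+1))]
          exact Finset.sum_congr rfl fun x hx => by
            rw [Nat.min_eq_left (Finset.mem_Ico.1 hx).1]
      rw [hmin1, hsum, hPe, if_neg (by omega), if_pos hage]
      have hk := key h ℓseq c.1 a.1 hage hah
      field_simp
      linear_combination -hk

lemma sumPe0 (t : ℕ) (ht : t ≤ h) : ∑ x ∈ Finset.Ico t h, Pe h x 0 = (h:ℝ) - t := by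
  have : ∀ x, Pe h x 0 = 1 := fun x => by simp [Pe]
  simp only [this]
  rw [sum_const_Ico h t ht 1, mul_one]

lemma sumPe_ge (t jj : ℕ) (h1 : 1 ≤ jj) (hjt : jj ≤ t) (ht : t ≤ h) :
    ∑ x ∈ Finset.Ico t h, Pe h x jj = ((h:ℝ) - t) * (-(1 / ((h:ℝ) - jj))) := by
  have : ∀ x ∈ Finset.Ico t h, Pe h x jj = -(1 / ((h:ℝ) - jj)) := fun x hx => by
    simp only [Finset.mem_Ico] at hx
    simp only [Pe, if_neg (by omega : ¬ jj = 0), if_neg (by omega : ¬ x + 1 = jj),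
      if_pos (by omega : jj ≤ x)]
  rw [Finset.sum_congr rfl this, sum_const_Ico h t ht _]

lemma sumPe_lt (t jj : ℕ) (ht : t < jj) (hj : jj < h) :
    ∑ x ∈ Finset.Ico t h, Pe h x jj = 0 := by
  have hne : ((h:ℝ) - jj) ≠ 0 := by
    have : (jj : ℝ) < h := by exact_mod_cast hj
    linarith
  rw [← Finset.sum_Ico_consecutive _ (le_of_lt ht) (le_of_lt hj)]
  have hlow : ∑ x ∈ Finset.Ico t jj, Pe h x jj = 1 := by
    calc ∑ x ∈ Finset.Ico t jj, Pe h x jj = Pe h (jj - 1) jj :=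
        Finset.sum_eq_single_of_mem _ (Finset.mem_Ico.2 ⟨by omega, by omega⟩)
          (fun x hx hxne => by
            simp only [Finset.mem_Ico] at hx
            simp only [Pe, if_neg (by omega : ¬ jj = 0), if_neg (by omega : ¬ x + 1 = jj),
              if_neg (by omega : ¬ jj ≤ x)])
      _ = 1 := by
        simp only [Pe, if_neg (by omega : ¬ jj = 0), if_pos (by omega : jj - 1 + 1 = jj)]
  rw [hlow, sumPe_ge h jj jj (by omega) le_rfl (le_of_lt hj)]
  field_simp
  ring

lemma QP_eq_one (hh : 0 < h) : Qmat h * Pmat h = 1 := by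
  ext m j
  rw [Matrix.mul_apply, Matrix.one_apply]
  show (∑ b : Fin h, Qe h m.1 b.1 * Pe h b.1 j.1) = if m = j then 1 else 0
  rw [Fin.sum_univ_eq_sum_range (fun x => Qe h m.1 x * Pe h x j.1)]
  have hmh : m.1 < h := m.2
  have hjh : j.1 < h := j.2
  have hmj : (if m = j then (1:ℝ) else 0) = (if m.1 = j.1 then 1 else 0) := by
    by_cases hx : m = j
    · rw [if_pos hx, if_pos (by rw [hx])]
    · rw [if_neg hx, if_neg (fun hc => hx (Fin.ext hc))]
  rw [hmj]
  have hneh : ((h:ℝ)) ≠ 0 := by positivity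
  rcases Nat.eq_zero_or_pos m.1 with hm0 | hm1
  · have hQ : ∀ x, Qe h m.1 x = 1 / (h:ℝ) := fun x => by simp [Qe, hm0]
    simp only [hQ]
    rw [← Finset.mul_sum, Finset.range_eq_Ico]
    rcases Nat.eq_zero_or_pos j.1 with hj0 | hj1
    · rw [hj0, sumPe0 h 0 (le_of_lt (by omega)), if_pos (by omega)]
      field_simp
      simp
    · rw [sumPe_lt h 0 j.1 hj1 hjh, if_neg (by omega), mul_zero]
  · have hne1 : ((h:ℝ) - m.1 + 1) ≠ 0 := by
      have : (m.1 : ℝ) < h := by exact_mod_cast hmh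
      linarith
    have hQ : ∀ x, Qe h m.1 x = if m.1 ≤ x then -(1 / ((h:ℝ) - m.1 + 1)) else
        if m.1 = x + 1 then ((h:ℝ) - m.1) / ((h:ℝ) - m.1 + 1) else 0 := fun x => by
      simp only [Qe, if_neg (by omega : ¬ m.1 = 0)]
    have hsplit : ∑ x ∈ Finset.range h, Qe h m.1 x * Pe h x j.1
        = ((h:ℝ) - m.1) / ((h:ℝ) - m.1 + 1) * Pe h (m.1 - 1) j.1
          + (-(1 / ((h:ℝ) - m.1 + 1))) * ∑ x ∈ Finset.Ico m.1 h, Pe h x j.1 := by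
      rw [Finset.range_eq_Ico, ← Finset.sum_Ico_consecutive _ (Nat.zero_le m.1) (le_of_lt hmh)]
      congr 1
      · calc ∑ x ∈ Finset.Ico 0 m.1, Qe h m.1 x * Pe h x j.1
            = Qe h m.1 (m.1 - 1) * Pe h (m.1 - 1) j.1 :=
            Finset.sum_eq_single_of_mem _ (Finset.mem_Ico.2 ⟨Nat.zero_le _, by omega⟩)
              (fun x hx hxne => by
                simp only [Finset.mem_Ico] at hx
                rw [hQ, if_neg (by omega), if_neg (by omega), zero_mul])
          _ = _ := by rw [hQ, if_neg (by omega), if_pos (by omega)]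
      · rw [Finset.mul_sum]
        exact Finset.sum_congr rfl fun x hx => by
          simp only [Finset.mem_Ico] at hx
          rw [hQ, if_pos (by omega)]
    rw [hsplit]
    rcases Nat.eq_zero_or_pos j.1 with hj0 | hj1
    · -- j = 0 : result 0
      rw [hj0, sumPe0 h m.1 (le_of_lt hmh), if_neg (by omega)]
      have : Pe h (m.1 - 1) 0 = 1 := by simp [Pe]
      rw [this]
      field_simp
      ring
    · have hnej : ((h:ℝ) - j.1) ≠ 0 := by
        have : (j.1 : ℝ) < h := by exact_mod_cast hjh
        linarith
      rcases lt_trichotomy j.1 m.1 with hlt | heq | hgt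
      · -- j < m : 0
        rw [sumPe_ge h m.1 j.1 hj1 (le_of_lt hlt) (le_of_lt hmh), if_neg (by omega)]
        have : Pe h (m.1 - 1) j.1 = -(1 / ((h:ℝ) - j.1)) := by
          simp only [Pe, if_neg (by omega : ¬ j.1 = 0), if_neg (by omega : ¬ m.1 - 1 + 1 = j.1),
            if_pos (by omega : j.1 ≤ m.1 - 1)]
        rw [this]
        field_simp
        ring
      · -- j = m : 1
        rw [← heq] at hne1 ⊢
        rw [sumPe_ge h j.1 j.1 hj1 le_rfl (le_of_lt hjh), if_pos rfl]
        have : Pe h (j.1 - 1) j.1 = 1 := by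
          simp only [Pe, if_neg (by omega : ¬ j.1 = 0), if_pos (by omega : j.1 - 1 + 1 = j.1)]
        rw [this]
        field_simp
      · -- j > m : 0
        rw [sumPe_lt h m.1 j.1 hgt hjh, if_neg (by omega), mul_zero]
        have : Pe h (m.1 - 1) j.1 = 0 := by
          simp only [Pe, if_neg (by omega : ¬ j.1 = 0), if_neg (by omega : ¬ m.1 - 1 + 1 = j.1),
            if_neg (by omega : ¬ j.1 ≤ m.1 - 1)]
        rw [this]
        ring

lemma charpoly_M (hh : 0 < h) :
    (Mmat h ℓseq).charpoly
      = ∏ j ∈ Finset.range h, (X - C (AP h ℓseq j h)) := by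
  have hQP := QP_eq_one h hh
  have hPQ : Pmat h * Qmat h = 1 := mul_eq_one_comm.mp hQP
  have hM : Mmat h ℓseq = Pmat h * Dmat h ℓseq * Qmat h := by
    calc Mmat h ℓseq = Mmat h ℓseq * (Pmat h * Qmat h) := by rw [hPQ, Matrix.mul_one]
    _ = (Mmat h ℓseq * Pmat h) * Qmat h := by rw [Matrix.mul_assoc]
    _ = Pmat h * Dmat h ℓseq * Qmat h := by rw [MP_eq_PD]
  have hmap1 : (Pmat h).map (C : ℝ →+* ℝ[X]) * (Qmat h).map (C : ℝ →+* ℝ[X]) = 1 := by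
    rw [← Matrix.map_mul, hPQ, Matrix.map_one _ (map_zero C) (map_one C)]
  have hchar : Matrix.charmatrix (Mmat h ℓseq)
      = (Pmat h).map (C : ℝ →+* ℝ[X]) * Matrix.charmatrix (Dmat h ℓseq)
          * (Qmat h).map (C : ℝ →+* ℝ[X]) := by
    rw [Matrix.charmatrix, Matrix.charmatrix, hM]
    rw [Matrix.mul_sub, Matrix.sub_mul]
    congr 1
    · rw [← Matrix.scalar_commute (X : ℝ[X]) (fun r' => Commute.all _ _), Matrix.mul_assoc,
        hmap1, Matrix.mul_one]
    · simp only [RingHom.mapMatrix_apply]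
      rw [← Matrix.map_mul, ← Matrix.map_mul]
  rw [Matrix.charpoly, hchar, Matrix.det_mul, Matrix.det_mul]
  have : ((Pmat h).map (C : ℝ →+* ℝ[X])).det * (Matrix.charmatrix (Dmat h ℓseq)).det
      * ((Qmat h).map (C : ℝ →+* ℝ[X])).det
      = (Matrix.charmatrix (Dmat h ℓseq)).det
        * (((Pmat h).map (C : ℝ →+* ℝ[X])).det * ((Qmat h).map (C : ℝ →+* ℝ[X])).det) := by
    ring
  rw [this, ← Matrix.det_mul, hmap1, Matrix.det_one, mul_one]
  have hD : Matrix.charmatrix (Dmat h ℓseq)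
      = Matrix.diagonal (fun j : Fin h => (X : ℝ[X]) - C (AP h ℓseq j.1 h)) := by
    ext i j
    by_cases hij : i = j
    · subst hij
      rw [Matrix.charmatrix_apply_eq, Matrix.diagonal_apply_eq]
      rw [Dmat, Matrix.diagonal_apply_eq]
    · rw [Matrix.charmatrix_apply_ne _ _ _ hij, Matrix.diagonal_apply_ne _ hij]
      rw [Dmat, Matrix.diagonal_apply_ne _ hij, map_zero, neg_zero]
  rw [hD, Matrix.det_diagonal]
  exact Fin.prod_univ_eq_prod_range (fun j => (X : ℝ[X]) - C (AP h ℓseq j h)) h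

lemma AP_mono (hseq0 : ∀ k, 0 ≤ ℓseq k) {i j : ℕ} (hij : i ≤ j) :
    AP h ℓseq j h ≤ AP h ℓseq i h := by
  apply Finset.sum_le_sum_of_subset_of_nonneg
  · exact Finset.Ico_subset_Ico hij le_rfl
  · intro k hk _
    simp only [Finset.mem_Ico] at hk
    have : (k : ℝ) ≤ h := by exact_mod_cast le_of_lt hk.2
    have := hseq0 k
    nlinarith

end CatAux

open Polynomial

namespace CatTree

/-- spine projection of a vertex value -/
def sp (h x : ℕ) : ℕ := if x ≤ h then x else x - h

section
variable {h : ℕ} {T : RTree} (hn : T.n = 2 * h) (hroot : T.root.1 = 0)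
  (hpar : ∀ v : Fin T.n, (T.parent v).1 = if v.1 ≤ h then v.1 - 1 else v.1 - h)

include hn hroot hpar
set_option linter.unusedSectionVars false

lemma vlt (v : Fin T.n) : v.1 < 2 * h := by rw [← hn]; exact v.2

lemma root_iff (v : Fin T.n) : v = T.root ↔ v.1 = 0 := by
  constructor
  · rintro rfl; exact hroot
  · intro hv; exact Fin.ext (by rw [hv, hroot])

lemma spine_iter (v : Fin T.n) (hv : v.1 ≤ h) :
    ∀ k, k ≤ v.1 → (T.parent^[k] v).1 = v.1 - k := by
  intro k
  induction k with
  | zero => simp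
  | succ k ih =>
    intro hk
    rw [Function.iterate_succ_apply', hpar, ih (by omega), if_pos (by omega)]
    omega

lemma anc_iff (u v : Fin T.n) : T.Anc u v ↔ (u = v ∨ u.1 ≤ sp h v.1) := by
  constructor
  · rintro ⟨k, rfl⟩
    induction k generalizing v with
    | zero => left; rfl
    | succ k ih =>
      rw [Function.iterate_succ_apply]
      rcases ih (T.parent v) with hl | hr
      · right
        rw [hl, hpar]
        have := vlt hn hroot hpar v
        unfold sp
        split_ifs <;> omega
      · right
        rw [hpar] at hr
        have := vlt hn hroot hpar v
        unfold sp at hr ⊢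
        split_ifs at hr ⊢ <;> omega
  · rintro (rfl | hle)
    · exact ⟨0, rfl⟩
    · by_cases hv : v.1 ≤ h
      · have hle' : u.1 ≤ v.1 := by unfold sp at hle; split_ifs at hle <;> omega
        refine ⟨v.1 - u.1, Fin.ext ?_⟩
        rw [spine_iter hn hroot hpar v hv _ (by omega)]
        omega
      · -- pendant
        have hsp : sp h v.1 = v.1 - h := by unfold sp; split_ifs <;> omega
        have hple : (T.parent v).1 = v.1 - h := by rw [hpar, if_neg hv]
        have hparh : (T.parent v).1 ≤ h := by have := vlt hn hroot hpar v; omega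
        refine ⟨(v.1 - h - u.1) + 1, Fin.ext ?_⟩
        rw [Function.iterate_succ_apply]
        rw [spine_iter hn hroot hpar (T.parent v) hparh _ (by rw [hple]; omega)]
        rw [hple]
        rw [hsp] at hle
        have := vlt hn hroot hpar v
        omega

lemma isLeaf_iff (v : Fin T.n) : T.IsLeaf v ↔ h ≤ v.1 := by
  unfold RTree.IsLeaf
  constructor
  · intro hc
    by_contra hv
    push_neg at hv
    have hlt : v.1 + 1 < T.n := by omega
    set c : Fin T.n := ⟨v.1 + 1, hlt⟩ with hc'
    have hmem : c ∈ T.children v := by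
      rw [RTree.children, Finset.mem_filter]
      refine ⟨Finset.mem_univ _, Fin.ext ?_, ?_⟩
      · rw [hpar]
        show (if (v.1+1 : ℕ) ≤ h then (v.1+1) - 1 else (v.1+1) - h) = v.1
        rw [if_pos (by omega)]
        omega
      · intro hcon
        rw [root_iff hn hroot hpar] at hcon
        exact absurd hcon (by show ¬ (v.1+1 = 0); omega)
    rw [hc] at hmem
    exact absurd hmem (Finset.notMem_empty _)
  · intro hv
    rw [Finset.eq_empty_iff_forall_notMem]
    intro u hu
    rw [RTree.children, Finset.mem_filter] at hu
    obtain ⟨-, hp, -⟩ := hu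
    have h2 := congrArg Fin.val hp
    rw [hpar] at h2
    have h3 := vlt hn hroot hpar u
    split_ifs at h2 <;> omega

lemma mem_leaves (v : Fin T.n) : v ∈ T.leaves ↔ h ≤ v.1 := by
  rw [RTree.leaves, Finset.mem_filter, isLeaf_iff hn hroot hpar]
  simp

lemma mem_internal (v : Fin T.n) : v ∈ T.internal ↔ v.1 < h := by
  rw [RTree.internal, Finset.mem_filter, isLeaf_iff hn hroot hpar]
  simp

lemma sum_univ_val {M : Type*} [AddCommMonoid M] (f : ℕ → M) :
    ∑ v : Fin T.n, f v.1 = ∑ x ∈ Finset.range (2 * h), f x := by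
  rw [Fin.sum_univ_eq_sum_range, hn]

lemma mem_Ldesc (v i : Fin T.n) :
    i ∈ T.Ldesc v ↔ (h ≤ i.1 ∧ (v = i ∨ v.1 ≤ sp h i.1)) := by
  rw [RTree.Ldesc, Finset.mem_filter, mem_leaves hn hroot hpar, anc_iff hn hroot hpar]

lemma card_Ldesc_spine (v : Fin T.n) (h1 : 1 ≤ v.1) (h2 : v.1 ≤ h) :
    (T.Ldesc v).card = h - v.1 + 1 := by
  have himg : (T.Ldesc v).image Fin.val
      = insert h (Finset.Ico (h + v.1) (2 * h)) := by
    ext x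
    simp only [Finset.mem_image, Finset.mem_insert, Finset.mem_Ico]
    constructor
    · rintro ⟨i, hi, rfl⟩
      rw [mem_Ldesc hn hroot hpar] at hi
      have := vlt hn hroot hpar i
      obtain ⟨hge, hc | hc⟩ := hi
      · have := congrArg Fin.val hc
        omega
      · unfold sp at hc
        split_ifs at hc <;> omega
    · intro hx
      have hx2 : x < T.n := by omega
      refine ⟨⟨x, hx2⟩, ?_, rfl⟩
      rw [mem_Ldesc hn hroot hpar]
      show h ≤ x ∧ (v = ⟨x, hx2⟩ ∨ v.1 ≤ sp h x)
      refine ⟨by omega, Or.inr ?_⟩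
      unfold sp
      split_ifs <;> omega
  have hcard := Finset.card_image_of_injective (T.Ldesc v) Fin.val_injective
  rw [himg] at hcard
  rw [← hcard, Finset.card_insert_of_notMem (by simp; omega), Nat.card_Ico]
  omega

lemma card_Ldesc_pendant (w : Fin T.n) (hw : h < w.1) : (T.Ldesc w).card = 1 := by
  have himg : (T.Ldesc w).image Fin.val = {w.1} := by
    ext x
    simp only [Finset.mem_image, Finset.mem_singleton]
    constructor
    · rintro ⟨i, hi, rfl⟩
      rw [mem_Ldesc hn hroot hpar] at hi
      obtain ⟨hge, hc | hc⟩ := hi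
      · exact (congrArg Fin.val hc).symm
      · exfalso
        unfold sp at hc
        split_ifs at hc <;> omega
    · rintro rfl
      refine ⟨w, ?_, rfl⟩
      rw [mem_Ldesc hn hroot hpar]
      exact ⟨by omega, Or.inl rfl⟩
  have hcard := Finset.card_image_of_injective (T.Ldesc w) Fin.val_injective
  rw [himg] at hcard
  rw [← hcard, Finset.card_singleton]

omit hn hroot hpar in
lemma sumF_Icc (ℓseq ℓp : ℕ → ℝ) (m : ℕ) (hm : m ≤ h) :
    ∑ x ∈ Finset.Icc 1 m, (if x ≤ h then ℓseq (x - 1) else ℓp (x - h))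
      = CatAux.sP ℓseq m := by
  rw [← Finset.Ico_add_one_right_eq_Icc, Finset.sum_Ico_eq_sum_range]
  unfold CatAux.sP
  rw [show m + 1 - 1 = m from rfl]
  exact Finset.sum_congr rfl fun k hk => by
    simp only [Finset.mem_range] at hk
    rw [if_pos (by omega), show 1 + k - 1 = k by omega]

omit hn hroot hpar in
lemma sum_cF_Icc (ℓseq ℓp : ℕ → ℝ) (a b : ℕ) (hb : b ≤ h) :
    ∑ x ∈ Finset.Icc (a + 1) b,
        (if x ≤ h then ((h - x + 1 : ℕ) : ℝ) * ℓseq (x - 1) else ℓp (x - h))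
      = CatAux.AP h ℓseq a b := by
  rw [← Finset.Ico_add_one_right_eq_Icc, Finset.sum_Ico_eq_sum_range]
  unfold CatAux.AP
  rw [Finset.sum_Ico_eq_sum_range]
  rw [show b + 1 - (a + 1) = b - a by omega]
  exact Finset.sum_congr rfl fun k hk => by
    simp only [Finset.mem_range] at hk
    rw [if_pos (by omega)]
    rw [show a + 1 + k - 1 = a + k by omega]
    rw [show h - (a + 1 + k) + 1 = h - (a + k) by omega]
    rw [Nat.cast_sub (by omega : a + k ≤ h)]

lemma cov_apply (ℓseq ℓp : ℕ → ℝ) (ℓ : Fin T.n → ℝ)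
    (hlspine : ∀ v : Fin T.n, 1 ≤ v.1 → v.1 ≤ h → ℓ v = ℓseq (v.1 - 1))
    (hlpend : ∀ v : Fin T.n, h < v.1 → ℓ v = ℓp (v.1 - h))
    (i j : T.Leaf) :
    T.cov ℓ i j = CatAux.sP ℓseq (min (sp h i.1.1) (sp h j.1.1))
      + (if i = j ∧ i.1.1 ≠ h then ℓp (sp h i.1.1) else 0) := by
  have hi : h ≤ i.1.1 := (mem_leaves hn hroot hpar i.1).1 i.2
  have hj : h ≤ j.1.1 := (mem_leaves hn hroot hpar j.1).1 j.2
  have hi2 : i.1.1 < 2 * h := vlt hn hroot hpar i.1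
  have hj2 : j.1.1 < 2 * h := vlt hn hroot hpar j.1
  have hspi : 1 ≤ sp h i.1.1 ∧ sp h i.1.1 ≤ h ∧ (sp h i.1.1 = h ↔ i.1.1 = h) := by
    unfold sp; split_ifs <;> omega
  have hspj : 1 ≤ sp h j.1.1 ∧ sp h j.1.1 ≤ h ∧ (sp h j.1.1 = h ↔ j.1.1 = h) := by
    unfold sp; split_ifs <;> omega
  set F : ℕ → ℝ := fun x => if x ≤ h then ℓseq (x - 1) else ℓp (x - h) with hF
  set G : ℕ → ℝ := fun x =>
    if x ≠ 0 ∧ (x = i.1.1 ∨ x ≤ sp h i.1.1) ∧ (x = j.1.1 ∨ x ≤ sp h j.1.1)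
    then F x else 0 with hG
  have hstep : T.cov ℓ i j = ∑ x ∈ Finset.range (2 * h), G x := by
    unfold RTree.cov
    rw [Matrix.sum_apply]
    rw [Finset.sum_congr rfl (fun v _ => by
      rw [Matrix.smul_apply, Matrix.vecMulVec_apply, smul_eq_mul])]
    rw [Finset.sum_filter]
    rw [← sum_univ_val hn hroot hpar G]
    refine Finset.sum_congr rfl fun v _ => ?_
    by_cases hvr : v = T.root
    · rw [if_neg (not_not_intro hvr)]
      have : v.1 = 0 := (root_iff hn hroot hpar v).1 hvr
      simp [hG, this]
    · rw [if_pos hvr]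
      have hv0 : v.1 ≠ 0 := fun hc => hvr ((root_iff hn hroot hpar v).2 hc)
      have hd : T.delta v i * T.delta v j
          = if T.Anc v i.1 ∧ T.Anc v j.1 then (1 : ℝ) else 0 := by
        unfold RTree.delta
        by_cases h1 : T.Anc v i.1 <;> by_cases h2 : T.Anc v j.1 <;> simp [h1, h2]
      rw [hd]
      have hiff : (T.Anc v i.1 ∧ T.Anc v j.1)
          ↔ (v.1 ≠ 0 ∧ (v.1 = i.1.1 ∨ v.1 ≤ sp h i.1.1) ∧ (v.1 = j.1.1 ∨ v.1 ≤ sp h j.1.1)) := by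
        rw [anc_iff hn hroot hpar, anc_iff hn hroot hpar]
        simp [Fin.ext_iff, hv0]
      have hℓ : ℓ v = F v.1 := by
        by_cases hvh : v.1 ≤ h
        · rw [hlspine v (by omega) hvh, hF]; simp [hvh]
        · rw [hlpend v (by omega), hF]; simp [hvh]
      simp only [hG]
      by_cases hcond : T.Anc v i.1 ∧ T.Anc v j.1
      · rw [if_pos hcond, mul_one, if_pos (hiff.1 hcond), hℓ]
      · rw [if_neg hcond, mul_zero, if_neg (fun hc => hcond (hiff.2 hc))]
  rw [hstep]
  rw [← Finset.sum_filter]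
  by_cases hij : i = j
  · subst hij
    by_cases hih : i.1.1 = h
    · have hset : (Finset.range (2 * h)).filter
          (fun x => x ≠ 0 ∧ (x = i.1.1 ∨ x ≤ sp h i.1.1) ∧ (x = i.1.1 ∨ x ≤ sp h i.1.1))
          = Finset.Icc 1 h := by
        ext x
        simp only [Finset.mem_filter, Finset.mem_range, Finset.mem_Icc]
        unfold sp
        split_ifs <;> omega
      rw [hset]
      simp only [hF]
      rw [sumF_Icc ℓseq ℓp h le_rfl]
      rw [if_neg (by simp [hih])]
      have : sp h i.1.1 = h := hspi.2.2.2 hih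
      rw [this, min_self, add_zero]
    · have hset : (Finset.range (2 * h)).filter
          (fun x => x ≠ 0 ∧ (x = i.1.1 ∨ x ≤ sp h i.1.1) ∧ (x = i.1.1 ∨ x ≤ sp h i.1.1))
          = insert i.1.1 (Finset.Icc 1 (sp h i.1.1)) := by
        ext x
        simp only [Finset.mem_filter, Finset.mem_range, Finset.mem_insert, Finset.mem_Icc]
        unfold sp
        split_ifs <;> omega
      rw [hset, Finset.sum_insert (by
        simp only [Finset.mem_Icc, not_and]
        intro h1
        omega)]
      simp only [hF]
      rw [sumF_Icc ℓseq ℓp _ hspi.2.1]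
      show _ = CatAux.sP ℓseq (min (sp h i.1.1) (sp h i.1.1))
          + (if True ∧ i.1.1 ≠ h then ℓp (sp h i.1.1) else 0)
      have hpos : (if True ∧ i.1.1 ≠ h then ℓp (sp h i.1.1) else 0) = ℓp (sp h i.1.1) :=
        if_pos ⟨trivial, hih⟩
      rw [hpos, min_self]
      have hFi : (if i.1.1 ≤ h then ℓseq (i.1.1 - 1) else ℓp (i.1.1 - h)) = ℓp (sp h i.1.1) := by
        have hnle : ¬ i.1.1 ≤ h := by omega
        rw [if_neg hnle]
        congr 1
        unfold sp
        split_ifs <;> omega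
      rw [hFi]
      ring
  · have hvne : i.1.1 ≠ j.1.1 := fun hc => hij (Subtype.ext (Fin.ext hc))
    have hset : (Finset.range (2 * h)).filter
        (fun x => x ≠ 0 ∧ (x = i.1.1 ∨ x ≤ sp h i.1.1) ∧ (x = j.1.1 ∨ x ≤ sp h j.1.1))
        = Finset.Icc 1 (min (sp h i.1.1) (sp h j.1.1)) := by
      ext x
      simp only [Finset.mem_filter, Finset.mem_range, Finset.mem_Icc, le_min_iff]
      unfold sp
      split_ifs <;> omega
    rw [hset]
    simp only [hF]
    rw [sumF_Icc ℓseq ℓp _ (le_trans (min_le_left _ _) hspi.2.1)]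
    rw [if_neg (fun hc => hij hc.1), add_zero]

lemma lstar_apply (ℓseq ℓp : ℕ → ℝ) (ℓ : Fin T.n → ℝ)
    (hlspine : ∀ v : Fin T.n, 1 ≤ v.1 → v.1 ≤ h → ℓ v = ℓseq (v.1 - 1))
    (hlpend : ∀ v : Fin T.n, h < v.1 → ℓ v = ℓp (v.1 - h))
    (v i : Fin T.n) (hv1 : 1 ≤ v.1) (hv2 : v.1 < h) (hi : h ≤ i.1)
    (hvi : v.1 ≤ sp h i.1) :
    T.lstar ℓ i v = CatAux.AP h ℓseq v.1 (sp h i.1)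
      + (if i.1 = h then 0 else ℓp (sp h i.1)) := by
  have hi2 : i.1 < 2 * h := vlt hn hroot hpar i
  have hspi : 1 ≤ sp h i.1 ∧ sp h i.1 ≤ h ∧ (sp h i.1 = h ↔ i.1 = h) := by
    unfold sp; split_ifs <;> omega
  set cF : ℕ → ℝ := fun x =>
    if x ≤ h then ((h - x + 1 : ℕ) : ℝ) * ℓseq (x - 1) else ℓp (x - h) with hcF
  set G : ℕ → ℝ := fun x =>
    if v.1 < x ∧ (x = i.1 ∨ x ≤ sp h i.1) then cF x else 0 with hG
  have hstep : T.lstar ℓ i v = ∑ x ∈ Finset.range (2 * h), G x := by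
    unfold RTree.lstar
    rw [Finset.sum_filter]
    rw [← sum_univ_val hn hroot hpar G]
    refine Finset.sum_congr rfl fun w _ => ?_
    have hw2 : w.1 < 2 * h := vlt hn hroot hpar w
    have hAncv : T.Anc w v ↔ w.1 ≤ v.1 := by
      rw [anc_iff hn hroot hpar]
      constructor
      · rintro (rfl | hle)
        · exact le_rfl
        · unfold sp at hle; split_ifs at hle <;> omega
      · intro hle
        right
        unfold sp
        split_ifs <;> omega
    have hAnci : T.Anc w i ↔ (w.1 = i.1 ∨ w.1 ≤ sp h i.1) := by
      rw [anc_iff hn hroot hpar]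
      constructor
      · rintro (rfl | hle)
        · exact Or.inl rfl
        · exact Or.inr hle
      · rintro (heq | hle)
        · exact Or.inl (Fin.ext heq)
        · exact Or.inr hle
    have hiff : (w ≠ T.root ∧
          ((T.Anc w i ∧ ¬ T.Anc w v) ∨ (T.Anc w v ∧ ¬ T.Anc w i)))
        ↔ (v.1 < w.1 ∧ (w.1 = i.1 ∨ w.1 ≤ sp h i.1)) := by
      rw [hAncv, hAnci, Ne, root_iff hn hroot hpar]
      constructor
      · rintro ⟨hw0, ⟨hai, hnv⟩ | ⟨hav, hna⟩⟩
        · exact ⟨by omega, hai⟩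
        · exact absurd (Or.inr (by omega)) hna
      · rintro ⟨hlt, hai⟩
        exact ⟨by omega, Or.inl ⟨hai, by omega⟩⟩
    by_cases hcond : w ≠ T.root ∧
        ((T.Anc w i ∧ ¬ T.Anc w v) ∨ (T.Anc w v ∧ ¬ T.Anc w i))
    · rw [if_pos hcond]
      obtain ⟨hlt, hai⟩ := hiff.1 hcond
      simp only [hG]
      rw [if_pos ⟨hlt, hai⟩]
      simp only [hcF]
      by_cases hwh : w.1 ≤ h
      · rw [card_Ldesc_spine hn hroot hpar w (by omega) hwh,
          hlspine w (by omega) hwh, if_pos hwh]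
      · push_neg at hwh
        rw [card_Ldesc_pendant hn hroot hpar w hwh, hlpend w hwh,
          if_neg (by omega)]
        simp
    · rw [if_neg hcond]
      simp only [hG]
      rw [if_neg (fun hc => hcond (hiff.2 hc))]
  rw [hstep, ← Finset.sum_filter]
  by_cases hih : i.1 = h
  · have hsp : sp h i.1 = h := hspi.2.2.2 hih
    have hset : (Finset.range (2 * h)).filter
        (fun x => v.1 < x ∧ (x = i.1 ∨ x ≤ sp h i.1))
        = Finset.Icc (v.1 + 1) h := by
      ext x
      simp only [Finset.mem_filter, Finset.mem_range, Finset.mem_Icc]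
      unfold sp
      split_ifs <;> omega
    rw [hset]
    simp only [hcF]
    rw [sum_cF_Icc ℓseq ℓp v.1 h le_rfl, hsp, if_pos hih, add_zero]
  · have hset : (Finset.range (2 * h)).filter
        (fun x => v.1 < x ∧ (x = i.1 ∨ x ≤ sp h i.1))
        = insert i.1 (Finset.Icc (v.1 + 1) (sp h i.1)) := by
      ext x
      simp only [Finset.mem_filter, Finset.mem_range, Finset.mem_insert, Finset.mem_Icc]
      unfold sp
      split_ifs <;> omega
    rw [hset, Finset.sum_insert (by
      simp only [Finset.mem_Icc, not_and]
      intro h1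
      omega)]
    simp only [hcF]
    rw [sum_cF_Icc ℓseq ℓp v.1 _ hspi.2.1]
    rw [if_neg (by omega : ¬ i.1 ≤ h), if_neg hih]
    have : ℓp (i.1 - h) = ℓp (sp h i.1) := by
      congr 1
      unfold sp
      split_ifs <;> omega
    rw [this]
    ring

def leafEquiv (h1 : 1 ≤ h) : T.Leaf ≃ Fin h where
  toFun i := ⟨sp h i.1.1 - 1, by
    have hi := (mem_leaves hn hroot hpar i.1).1 i.2
    have := vlt hn hroot hpar i.1
    unfold sp
    split_ifs <;> omega⟩
  invFun a := ⟨⟨if a.1 = h - 1 then h else h + a.1 + 1, by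
      have := a.2
      split_ifs <;> omega⟩, by
    rw [mem_leaves hn hroot hpar]
    show h ≤ (if a.1 = h - 1 then h else h + a.1 + 1)
    split_ifs <;> omega⟩
  left_inv i := by
    have hi := (mem_leaves hn hroot hpar i.1).1 i.2
    have hi2 := vlt hn hroot hpar i.1
    apply Subtype.ext
    apply Fin.ext
    show (if sp h i.1.1 - 1 = h - 1 then h else h + (sp h i.1.1 - 1) + 1) = i.1.1
    unfold sp
    split_ifs <;> omega
  right_inv a := by
    have := a.2
    apply Fin.ext
    show sp h (if a.1 = h - 1 then h else h + a.1 + 1) - 1 = a.1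
    unfold sp
    split_ifs <;> omega

lemma sp_invFun (h1 : 1 ≤ h) (a : Fin h) :
    sp h (((leafEquiv hn hroot hpar h1).symm a)).1.1 = a.1 + 1 := by
  have := a.2
  show sp h (if a.1 = h - 1 then h else h + a.1 + 1) = a.1 + 1
  unfold sp
  split_ifs <;> omega

lemma val_invFun (h1 : 1 ≤ h) (a : Fin h) :
    (((leafEquiv hn hroot hpar h1).symm a)).1.1 = (if a.1 = h - 1 then h else h + a.1 + 1) :=
  rfl

end
end CatTree

/-- The binary caterpillar tree of height `h`, encoded on vertices `Fin (2h)`: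
root `∘ = 0`; spine vertices `1, …, h` with parent `i - 1`; pendant leaves
`h + j` (for `1 ≤ j ≤ h-1`) with parent `j`.  Spine edge `{i, i+1}` has length
`ℓseq i` (and `{∘,1}` has length `ℓseq 0`); the pendant edge `{j, j'}` has length
`ℓp j`.  The tree is trace-balanced iff `ℓp j = ∑_{k=j}^{h-1} (h-k) ℓseq k` for
`j = 1, …, h-1`, and in this case the eigenvalues of its covariance matrix are
`ℓ'_0 ≥ ℓ'_1 ≥ ⋯ ≥ ℓ'_{h-1}` (counted with multiplicity), where
`ℓ'_0 := ∑_{k=0}^{h-1} (h-k) ℓseq k`. -/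
theorem caterpillar_trace_balanced_spectrum (h : ℕ) (hh : 2 ≤ h) (T : RTree)
    (hn : T.n = 2 * h) (hroot : T.root.1 = 0)
    (hpar : ∀ v : Fin T.n, (T.parent v).1 = if v.1 ≤ h then v.1 - 1 else v.1 - h)
    (ℓseq : ℕ → ℝ) (ℓp : ℕ → ℝ)
    (hseq0 : ∀ k, 0 ≤ ℓseq k) (hseqleaf : 0 < ℓseq (h - 1))
    (hppos : ∀ j, 1 ≤ j → j ≤ h - 1 → 0 < ℓp j)
    (ℓ : Fin T.n → ℝ)
    (hlspine : ∀ v : Fin T.n, 1 ≤ v.1 → v.1 ≤ h → ℓ v = ℓseq (v.1 - 1))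
    (hlpend : ∀ v : Fin T.n, h < v.1 → ℓ v = ℓp (v.1 - h)) :
    let lp0 : ℝ := ∑ k ∈ Finset.range h, ((h : ℝ) - (k : ℝ)) * ℓseq k
    let g : ℕ → ℝ := fun j => if j = 0 then lp0 else ℓp j
    (T.TraceBalanced ℓ ↔
      ∀ j ∈ Finset.Icc 1 (h - 1),
        ℓp j = ∑ k ∈ Finset.Ico j h, ((h : ℝ) - (k : ℝ)) * ℓseq k) ∧
    (T.TraceBalanced ℓ →
      (T.cov ℓ).charpoly = ∏ j ∈ Finset.range h, (Polynomial.X - Polynomial.C (g j)) ∧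
      ∀ j k, j ≤ k → k < h → g k ≤ g j) := by
  intro lp0 g
  have h1 : 1 ≤ h := by omega
  have hiff : T.TraceBalanced ℓ ↔
      ∀ j ∈ Finset.Icc 1 (h - 1),
        ℓp j = ∑ k ∈ Finset.Ico j h, ((h : ℝ) - (k : ℝ)) * ℓseq k := by
    constructor
    · intro htb j hj
      rw [Finset.mem_Icc] at hj
      have hjh : j < h := by omega
      have hv' : j < T.n := by omega
      have hi1' : h + j < T.n := by omega
      have hi2' : h < T.n := by omega
      set v : Fin T.n := ⟨j, hv'⟩ with hvdef
      set i1 : Fin T.n := ⟨h + j, hi1'⟩ with hi1def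
      set i2 : Fin T.n := ⟨h, hi2'⟩ with hi2def
      have hvv : v.1 = j := rfl
      have hi1v : i1.1 = h + j := rfl
      have hi2v : i2.1 = h := rfl
      have hvmem : v ∈ T.internal := (CatTree.mem_internal hn hroot hpar v).2 hjh
      have hvroot : v ≠ T.root := fun hc => by
        have := (CatTree.root_iff hn hroot hpar v).1 hc
        have : j = 0 := this
        omega
      have hsp1 : CatTree.sp h i1.1 = j := by
        show CatTree.sp h (h + j) = j
        unfold CatTree.sp
        split_ifs <;> omega
      have hsp2 : CatTree.sp h i2.1 = h := by
        show CatTree.sp h h = h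
        unfold CatTree.sp
        split_ifs <;> omega
      have h1mem : i1 ∈ T.Ldesc v := by
        rw [CatTree.mem_Ldesc hn hroot hpar]
        exact ⟨by omega, Or.inr (by rw [hsp1])⟩
      have h2mem : i2 ∈ T.Ldesc v := by
        rw [CatTree.mem_Ldesc hn hroot hpar]
        exact ⟨by omega, Or.inr (by rw [hsp2]; omega)⟩
      have heq := htb v hvmem hvroot i1 h1mem i2 h2mem
      rw [CatTree.lstar_apply hn hroot hpar ℓseq ℓp ℓ hlspine hlpend v i1
          (by omega) (by omega) (by omega) (by rw [hsp1]),
        CatTree.lstar_apply hn hroot hpar ℓseq ℓp ℓ hlspine hlpend v i2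
          (by omega) (by omega) (by omega) (by rw [hsp2]; omega)] at heq
      rw [hsp1, hsp2] at heq
      rw [if_neg (by omega : ¬ i1.1 = h), if_pos (by omega : i2.1 = h)] at heq
      have hAPjj : CatAux.AP h ℓseq v.1 j = 0 := by
        show CatAux.AP h ℓseq j j = 0
        unfold CatAux.AP
        simp
      rw [hAPjj] at heq
      show ℓp j = CatAux.AP h ℓseq v.1 h
      linarith [heq]
    · intro hb v hv hvr i hi j' hj'
      have hv1 : 1 ≤ v.1 := by
        have : v.1 ≠ 0 := fun hc => hvr ((CatTree.root_iff hn hroot hpar v).2 hc)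
        omega
      have hv2 : v.1 < h := (CatTree.mem_internal hn hroot hpar v).1 hv
      have key1 : ∀ i : Fin T.n, i ∈ T.Ldesc v →
          T.lstar ℓ i v = CatAux.AP h ℓseq v.1 h := by
        intro i hi
        obtain ⟨hge, hor⟩ := (CatTree.mem_Ldesc hn hroot hpar v i).1 hi
        have hiv2 := CatTree.vlt hn hroot hpar i
        have hvi : v.1 ≤ CatTree.sp h i.1 := by
          rcases hor with hc | hle
          · exfalso
            have := congrArg Fin.val hc
            omega
          · exact hle
        have hsple : 1 ≤ CatTree.sp h i.1 ∧ CatTree.sp h i.1 ≤ h ∧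
            (CatTree.sp h i.1 = h ↔ i.1 = h) := by
          unfold CatTree.sp
          split_ifs <;> omega
        rw [CatTree.lstar_apply hn hroot hpar ℓseq ℓp ℓ hlspine hlpend v i hv1 hv2 hge hvi]
        by_cases hih : i.1 = h
        · rw [if_pos hih, add_zero, (show CatTree.sp h i.1 = h from hsple.2.2.2 hih)]
        · rw [if_neg hih]
          have hsp1 : 1 ≤ CatTree.sp h i.1 := hsple.1
          have hsp2 : CatTree.sp h i.1 ≤ h - 1 := by
            have := hsple.2.2
            omega
          have hbv := hb (CatTree.sp h i.1) (Finset.mem_Icc.2 ⟨hsp1, hsp2⟩)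
          rw [hbv]
          exact CatAux.AP_glue h ℓseq hvi hsple.2.1
      rw [key1 i hi, key1 j' hj']
  refine ⟨hiff, fun htb => ?_⟩
  have hb := hiff.1 htb
  have hbAP : ∀ j, 1 ≤ j → j < h → ℓp j = CatAux.AP h ℓseq j h := fun j hj1 hj2 =>
    hb j (Finset.mem_Icc.2 ⟨hj1, by omega⟩)
  have hg : ∀ j, j < h → g j = CatAux.AP h ℓseq j h := by
    intro j hj
    by_cases hj0 : j = 0
    · subst hj0
      show lp0 = CatAux.AP h ℓseq 0 h
      show (∑ k ∈ Finset.range h, ((h : ℝ) - (k : ℝ)) * ℓseq k) = _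
      unfold CatAux.AP
      rw [Finset.range_eq_Ico]
    · show (if j = 0 then lp0 else ℓp j) = _
      rw [if_neg hj0]
      exact hbAP j (by omega) hj
  constructor
  · set e := CatTree.leafEquiv hn hroot hpar h1 with he
    have hreidx : Matrix.reindex e e (T.cov ℓ) = CatAux.Mmat h ℓseq := by
      ext a b
      rw [Matrix.reindex_apply, Matrix.submatrix_apply]
      rw [CatTree.cov_apply hn hroot hpar ℓseq ℓp ℓ hlspine hlpend (e.symm a) (e.symm b)]
      have hsa : CatTree.sp h ((e.symm a)).1.1 = a.1 + 1 := CatTree.sp_invFun hn hroot hpar h1 a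
      have hsb : CatTree.sp h ((e.symm b)).1.1 = b.1 + 1 := CatTree.sp_invFun hn hroot hpar h1 b
      rw [hsa, hsb]
      show CatAux.sP ℓseq (min (a.1 + 1) (b.1 + 1)) + _ = CatAux.Me h ℓseq a.1 b.1
      unfold CatAux.Me
      have hmin : min (a.1 + 1) (b.1 + 1) = min a.1 b.1 + 1 := by omega
      rw [hmin]
      congr 1
      by_cases hab : a = b
      · subst hab
        by_cases hah : ((e.symm a)).1.1 = h
        · have hap1 : a.1 + 1 = h := by rw [← hsa, (show CatTree.sp h ((e.symm a)).1.1 = h by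
            rw [hah]; unfold CatTree.sp; split_ifs <;> omega)]
          rw [if_neg (fun hc => hc.2 hah), if_pos rfl, hap1]
          unfold CatAux.AP
          simp
        · have hap1 : a.1 + 1 < h := by
            have h2 := CatTree.vlt hn hroot hpar (e.symm a).1
            have h3 := (CatTree.mem_leaves hn hroot hpar (e.symm a).1).1 (e.symm a).2
            rw [← hsa]
            unfold CatTree.sp
            split_ifs <;> omega
          rw [if_pos ⟨rfl, hah⟩, if_pos rfl]
          exact hbAP (a.1 + 1) (by omega) hap1
      · rw [if_neg (fun hc => hab (e.symm.injective hc.1)),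
          if_neg (fun hc => hab (Fin.ext hc))]
    rw [← Matrix.charpoly_reindex e (T.cov ℓ), hreidx,
      CatAux.charpoly_M h ℓseq (by omega)]
    exact Finset.prod_congr rfl fun j hj => by
      rw [hg j (Finset.mem_range.1 hj)]
  · intro j k hjk hkh
    rw [hg j (by omega), hg k hkh]
    exact CatAux.AP_mono h ℓseq hseq0 hjk
end
end

section
/- Let T be an ORB-tree topology and f : I → [0,∞) a function on internal nodes that is decreasing (f(u) ≥ f(v) whenever u is an ancestor of v) and strictly positive at the fringe (f(u) > 0 whenever u is the parent of a leaf). Then there exists a branch length function ℓ : E → [0,∞), strictly positive on leaf-adjacent edges, such that the resulting tree is trace-balanced with ℓ*(v,i) = f(v) for all v ∈ I and i ∈ L(v); consequently the spectrum of the covariance matrix equals f(I), with the multiplicity of λ equal to |f^{−1}({λ})|. -/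
open Finset

noncomputable section
open scoped Classical

namespace RTree

variable (T : RTree)

lemma anc_refl (v : Fin T.n) : T.Anc v v := ⟨0, rfl⟩

lemma anc_root (v : Fin T.n) : T.Anc T.root v := T.reach v

lemma anc_trans {u v w : Fin T.n} (h1 : T.Anc u v) (h2 : T.Anc v w) : T.Anc u w := by
  obtain ⟨k, hk⟩ := h1; obtain ⟨m, hm⟩ := h2
  exact ⟨k + m, by rw [Function.iterate_add_apply, hm, hk]⟩

lemma iterate_root (k : ℕ) : T.parent^[k] T.root = T.root :=
  Function.iterate_fixed T.parent_root k

lemma eq_root_of_anc {v : Fin T.n} (h : T.Anc v T.root) : v = T.root := by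
  obtain ⟨k, hk⟩ := h; rw [iterate_root] at hk; exact hk.symm

lemma depth_spec (v : Fin T.n) : T.parent^[T.depth v] v = T.root := Nat.find_spec (T.reach v)

lemma depth_le {v : Fin T.n} {k : ℕ} (h : T.parent^[k] v = T.root) : T.depth v ≤ k :=
  Nat.find_le h

lemma depth_eq_of_iterate : ∀ (k : ℕ) {v w : Fin T.n}, T.parent^[k] v = w → w ≠ T.root →
    T.depth v = T.depth w + k := by
  intro k
  induction k with
  | zero => intro v w h _; simp at h; simp [h]
  | succ k ih =>
    intro v w h hw
    have hv : v ≠ T.root := by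
      rintro rfl; rw [iterate_root] at h; exact hw h.symm
    have h' : T.parent^[k] (T.parent v) = w := by
      rw [← Function.iterate_succ_apply]; exact h
    have hpd : T.depth v = T.depth (T.parent v) + 1 := by
      have h1 : 1 ≤ T.depth v := by
        rcases Nat.eq_zero_or_pos (T.depth v) with h0 | h0
        · exfalso; have := T.depth_spec v; rw [h0] at this; exact hv this
        · exact h0
      have h2 : T.parent^[T.depth v - 1] (T.parent v) = T.root := by
        have : T.parent^[T.depth v - 1 + 1] v = T.root := by
          rw [Nat.sub_add_cancel h1]; exact T.depth_spec v
        rw [← this, Function.iterate_succ_apply]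
      have h3 : T.depth (T.parent v) ≤ T.depth v - 1 := T.depth_le h2
      have h4 : T.parent^[T.depth (T.parent v) + 1] v = T.root := by
        rw [Function.iterate_succ_apply]; exact T.depth_spec (T.parent v)
      have h5 : T.depth v ≤ T.depth (T.parent v) + 1 := T.depth_le h4
      omega
    rw [hpd, ih h' hw]; ring

lemma anc_antisymm {u v : Fin T.n} (h1 : T.Anc u v) (h2 : T.Anc v u) : u = v := by
  by_cases hu : u = T.root
  · subst hu; exact (T.eq_root_of_anc h2).symm
  by_cases hv : v = T.root
  · subst hv; exact T.eq_root_of_anc h1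
  obtain ⟨k, hk⟩ := h1; obtain ⟨m, hm⟩ := h2
  have e1 := T.depth_eq_of_iterate k hk hu
  have e2 := T.depth_eq_of_iterate m hm hv
  have : k = 0 := by omega
  subst this; simpa using hk.symm

lemma anc_comparable {u v w : Fin T.n} (h1 : T.Anc u w) (h2 : T.Anc v w) :
    T.Anc u v ∨ T.Anc v u := by
  obtain ⟨a, ha⟩ := h1; obtain ⟨b, hb⟩ := h2
  rcases le_total a b with h | h
  · right
    exact ⟨b - a, by rw [← ha, ← Function.iterate_add_apply, Nat.sub_add_cancel h, hb]⟩
  · left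
    exact ⟨a - b, by rw [← hb, ← Function.iterate_add_apply, Nat.sub_add_cancel h, ha]⟩

lemma mem_children_iff {u v : Fin T.n} :
    u ∈ T.children v ↔ T.parent u = v ∧ u ≠ T.root := by
  simp [children]

lemma anc_of_child {u v : Fin T.n} (h : u ∈ T.children v) : T.Anc v u := by
  rw [mem_children_iff] at h
  exact ⟨1, h.1⟩

/-- first step on the path from `w` up to `v`. -/
lemma anc_step {v w : Fin T.n} (h : T.Anc v w) (hne : w ≠ v) :
    ∃ c ∈ T.children v, T.Anc c w := by
  classical
  obtain ⟨k, hk⟩ := h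
  have hex : ∃ k, T.parent^[k] w = v := ⟨k, hk⟩
  set m := Nat.find hex with hm
  have hms : T.parent^[m] w = v := Nat.find_spec hex
  have hm1 : 1 ≤ m := by
    rcases Nat.eq_zero_or_pos m with h0 | h0
    · exfalso; rw [h0] at hms; exact hne (by simpa using hms)
    · exact h0
  refine ⟨T.parent^[m - 1] w, ?_, ⟨m - 1, rfl⟩⟩
  have hkey : T.parent (T.parent^[m - 1] w) = v := by
    have : T.parent^[m - 1 + 1] w = v := by rw [Nat.sub_add_cancel hm1]; exact hms
    rw [← this, Function.iterate_succ_apply']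
  rw [mem_children_iff]
  refine ⟨hkey, ?_⟩
  intro hr
  have hvr : v = T.root := by rw [← hkey, hr, T.parent_root]
  have : T.parent^[m - 1] w = v := by rw [hr, hvr]
  exact Nat.find_min hex (by omega) this

lemma not_isLeaf_iff {v : Fin T.n} : ¬ T.IsLeaf v ↔ (T.children v).Nonempty := by
  rw [IsLeaf, ← Finset.not_nonempty_iff_eq_empty, not_not]

lemma mem_internal_iff {v : Fin T.n} : v ∈ T.internal ↔ ¬ T.IsLeaf v := by simp [internal]

lemma mem_leaves_iff {v : Fin T.n} : v ∈ T.leaves ↔ T.IsLeaf v := by simp [leaves]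

lemma mem_Ldesc_iff {v i : Fin T.n} : i ∈ T.Ldesc v ↔ i ∈ T.leaves ∧ T.Anc v i := by
  simp [Ldesc]

lemma isLeaf_anc {v w : Fin T.n} (hv : T.IsLeaf v) (h : T.Anc v w) : w = v := by
  by_contra hne
  obtain ⟨c, hc, -⟩ := T.anc_step h hne
  rw [IsLeaf] at hv; rw [hv] at hc; simp at hc

lemma subtree_ssubset {c v : Fin T.n} (hc : c ∈ T.children v) :
    (Finset.univ.filter fun u => T.Anc c u) ⊂ (Finset.univ.filter fun u => T.Anc v u) := by
  rw [mem_children_iff] at hc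
  constructor
  · intro u hu
    simp only [Finset.mem_filter, Finset.mem_univ, true_and] at hu ⊢
    exact T.anc_trans ⟨1, hc.1⟩ hu
  · intro hsub
    have hv : v ∈ Finset.univ.filter fun u => T.Anc v u := by
      simp [T.anc_refl]
    have := hsub hv
    simp only [Finset.mem_filter, Finset.mem_univ, true_and] at this
    -- T.Anc c v and T.Anc v c imply c = v, contradiction with parent c = v, c ≠ root
    have hcv : c = v := T.anc_antisymm this ⟨1, hc.1⟩
    -- then parent c = c, so c is a fixed point, iterate to root gives c = root
    obtain ⟨k, hk⟩ := T.reach c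
    have : T.parent^[k] c = c := by
      subst hcv
      exact Function.iterate_fixed hc.1 k
    exact hc.2 (by rw [← hk, this])

lemma exists_leaf_desc (v : Fin T.n) : ∃ i ∈ T.leaves, T.Anc v i := by
  by_cases h : T.IsLeaf v
  · exact ⟨v, T.mem_leaves_iff.mpr h, T.anc_refl v⟩
  · obtain ⟨c, hc⟩ := (T.not_isLeaf_iff).mp h
    have hlt := Finset.card_lt_card (T.subtree_ssubset hc)
    obtain ⟨i, hi, hanc⟩ := exists_leaf_desc c
    exact ⟨i, hi, T.anc_trans (T.anc_of_child hc) hanc⟩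
termination_by (Finset.univ.filter fun u => T.Anc v u).card

lemma Ldesc_nonempty (v : Fin T.n) : (T.Ldesc v).Nonempty := by
  obtain ⟨i, hi, h⟩ := T.exists_leaf_desc v
  exact ⟨i, T.mem_Ldesc_iff.mpr ⟨hi, h⟩⟩

lemma card_Ldesc_pos (v : Fin T.n) : 0 < (T.Ldesc v).card :=
  Finset.card_pos.mpr (T.Ldesc_nonempty v)

lemma Ldesc_subset {v w : Fin T.n} (h : T.Anc v w) : T.Ldesc w ⊆ T.Ldesc v := by
  intro i hi
  rw [mem_Ldesc_iff] at hi ⊢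
  exact ⟨hi.1, T.anc_trans h hi.2⟩

end RTree

namespace RTree

variable (T : RTree)

lemma depth_children {c v : Fin T.n} (hc : c ∈ T.children v) : T.depth c = T.depth v + 1 := by
  rw [mem_children_iff] at hc
  have := T.depth_eq_of_iterate 1 (v := c) (w := T.parent c) rfl
  by_cases hv : v = T.root
  · subst hv
    -- depth c = 1 : parent c = root
    have h1 : T.parent^[1] c = T.root := by simpa using hc.1
    have hle : T.depth c ≤ 1 := T.depth_le h1
    have hpos : 0 < T.depth c := by
      rcases Nat.eq_zero_or_pos (T.depth c) with h0 | h0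
      · exfalso; have := T.depth_spec c; rw [h0] at this; exact hc.2 this
      · exact h0
    have hr : T.depth T.root = 0 := Nat.le_zero.mp (T.depth_le (by simp))
    omega
  · rw [hc.1] at this; rw [this hv]

lemma children_disjoint_Ldesc {v c₀ c₁ : Fin T.n} (h0 : c₀ ∈ T.children v)
    (h1 : c₁ ∈ T.children v) (hne : c₀ ≠ c₁) : Disjoint (T.Ldesc c₀) (T.Ldesc c₁) := by
  rw [Finset.disjoint_left]
  intro i hi0 hi1
  rw [mem_Ldesc_iff] at hi0 hi1
  have hcomp := T.anc_comparable hi0.2 hi1.2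
  have hd0 := T.depth_children h0
  have hd1 := T.depth_children h1
  rcases hcomp with h | h
  · obtain ⟨k, hk⟩ := h
    have hc1r : c₁ ≠ T.root := (T.mem_children_iff.mp h1).2
    have hc0r : c₀ ≠ T.root := (T.mem_children_iff.mp h0).2
    have := T.depth_eq_of_iterate k hk hc0r
    have hk0 : k = 0 := by omega
    exact hne (by rw [← hk, hk0]; simp)
  · obtain ⟨k, hk⟩ := h
    have hc1r : c₁ ≠ T.root := (T.mem_children_iff.mp h1).2
    have := T.depth_eq_of_iterate k hk hc1r
    have hk0 : k = 0 := by omega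
    exact hne (by rw [← hk, hk0]; simp)

lemma Ldesc_eq_union {v c₀ c₁ : Fin T.n} (hv : ¬ T.IsLeaf v)
    (hch : T.children v = {c₀, c₁}) : T.Ldesc v = T.Ldesc c₀ ∪ T.Ldesc c₁ := by
  apply Finset.Subset.antisymm
  · intro i hi
    rw [mem_Ldesc_iff] at hi
    have hne : i ≠ v := by
      rintro rfl
      exact hv ((T.mem_leaves_iff).mp hi.1)
    obtain ⟨c, hc, hanc⟩ := T.anc_step hi.2 hne
    rw [hch] at hc
    simp only [Finset.mem_insert, Finset.mem_singleton] at hc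
    rcases hc with rfl | rfl
    · exact Finset.mem_union_left _ (T.mem_Ldesc_iff.mpr ⟨hi.1, hanc⟩)
    · exact Finset.mem_union_right _ (T.mem_Ldesc_iff.mpr ⟨hi.1, hanc⟩)
  · apply Finset.union_subset
    · apply T.Ldesc_subset
      apply T.anc_of_child; rw [hch]; simp
    · apply T.Ldesc_subset
      apply T.anc_of_child; rw [hch]; simp

lemma card_Ldesc_add {v c₀ c₁ : Fin T.n} (hv : ¬ T.IsLeaf v) (hne : c₀ ≠ c₁)
    (hch : T.children v = {c₀, c₁}) :
    (T.Ldesc v).card = (T.Ldesc c₀).card + (T.Ldesc c₁).card := by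
  have hm0 : c₀ ∈ T.children v := by rw [hch]; simp
  have hm1 : c₁ ∈ T.children v := by rw [hch]; simp
  rw [T.Ldesc_eq_union hv hch,
    Finset.card_union_of_disjoint (T.children_disjoint_Ldesc hm0 hm1 hne)]

lemma card_internal_eq (hT : T.IsORB) : T.internal.card = T.leaves.card := by
  classical
  have hpart : T.internal.card + T.leaves.card = T.n := by
    have := Finset.card_filter_add_card_filter_not
      (s := (Finset.univ : Finset (Fin T.n))) (p := fun v => ¬ T.IsLeaf v)
    simp only [Finset.card_univ, Fintype.card_fin] at this
    rw [internal, leaves]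
    have h2 : (Finset.univ.filter fun a : Fin T.n => ¬¬T.IsLeaf a)
        = Finset.univ.filter fun v => T.IsLeaf v := by
      ext v; simp
    rw [← h2]
    exact this
  have hfiber : (Finset.univ.filter fun u : Fin T.n => u ≠ T.root).card
      = ∑ v : Fin T.n, (T.children v).card := by
    rw [Finset.card_eq_sum_card_fiberwise
      (f := T.parent) (t := Finset.univ) (fun x _ => Finset.mem_univ _)]
    apply Finset.sum_congr rfl
    intro v _
    congr 1
    ext u
    simp [children, and_comm]
  have hcardR : (Finset.univ.filter fun u : Fin T.n => u ≠ T.root).card = T.n - 1 := by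
    rw [Finset.filter_ne', Finset.card_erase_of_mem (Finset.mem_univ _)]
    simp
  have hsplit : ∑ v : Fin T.n, (T.children v).card
      = ∑ v ∈ T.internal, (T.children v).card + ∑ v ∈ T.leaves, (T.children v).card := by
    rw [internal, leaves]
    rw [← Finset.sum_filter_add_sum_filter_not Finset.univ (fun v => ¬ T.IsLeaf v)
      (fun v => (T.children v).card)]
    congr 2
    ext v
    simp
  have hleaf0 : ∑ v ∈ T.leaves, (T.children v).card = 0 := by
    apply Finset.sum_eq_zero
    intro v hv
    rw [mem_leaves_iff, IsLeaf] at hv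
    rw [hv]
    simp
  have hroot : T.root ∈ T.internal := T.mem_internal_iff.mpr hT.1
  have hint : ∑ v ∈ T.internal, (T.children v).card
      = 1 + 2 * (T.internal.card - 1) := by
    rw [← Finset.add_sum_erase _ _ hroot, hT.2.1]
    congr 1
    rw [Finset.sum_congr rfl (g := fun _ => 2), Finset.sum_const, smul_eq_mul,
      Finset.card_erase_of_mem hroot, mul_comm]
    intro v hv
    rw [Finset.mem_erase, mem_internal_iff] at hv
    exact hT.2.2 v hv.2 hv.1
  have hIpos : 1 ≤ T.internal.card := Finset.card_pos.mpr ⟨T.root, hroot⟩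
  have h1 : 1 ≤ T.n := T.npos
  omega

end RTree

namespace RTree

variable (T : RTree)

/-- The candidate branch-length function built from `f`. -/
def ell (f : Fin T.n → ℝ) : Fin T.n → ℝ := fun v =>
  if v = T.root then 0
  else if T.IsLeaf v then f (T.parent v)
  else (f (T.parent v) - f v) / (T.Ldesc v).card

lemma anc_parent_of_anc_ne {w v : Fin T.n} (h : T.Anc w v) (hne : w ≠ v) :
    T.Anc w (T.parent v) := by
  obtain ⟨k, hk⟩ := h
  have hk1 : 1 ≤ k := by
    rcases Nat.eq_zero_or_pos k with h0 | h0
    · exfalso; apply hne; rw [← hk, h0]; simp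
    · exact h0
  refine ⟨k - 1, ?_⟩
  have : T.parent^[k - 1] (T.parent v) = T.parent^[k - 1 + 1] v := by
    rw [Function.iterate_succ_apply]
  rw [this, Nat.sub_add_cancel hk1]
  exact hk

lemma not_anc_parent {v : Fin T.n} (hv : v ≠ T.root) : ¬ T.Anc v (T.parent v) := by
  rintro ⟨k, hk⟩
  have : T.parent^[k + 1] v = v := by rw [Function.iterate_succ_apply]; exact hk
  have := T.depth_eq_of_iterate (k + 1) this hv
  omega

lemma lstar_filter {i v : Fin T.n} (h : T.Anc v i) (ℓ : Fin T.n → ℝ) :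
    T.lstar ℓ i v = ∑ w ∈ Finset.univ.filter (fun w => T.Anc w i ∧ ¬ T.Anc w v),
      ((T.Ldesc w).card : ℝ) * ℓ w := by
  rw [lstar]
  apply Finset.sum_congr _ (fun _ _ => rfl)
  ext w
  simp only [Finset.mem_filter, Finset.mem_univ, true_and]
  constructor
  · rintro ⟨hw, h1 | h2⟩
    · exact h1
    · exact absurd (T.anc_trans h2.1 h) h2.2
  · intro h1
    refine ⟨?_, Or.inl h1⟩
    rintro rfl
    exact h1.2 (T.anc_root v)

lemma lstar_self (i : Fin T.n) (ℓ : Fin T.n → ℝ) : T.lstar ℓ i i = 0 := by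
  rw [T.lstar_filter (T.anc_refl i)]
  rw [Finset.sum_eq_zero]
  intro w hw
  simp only [Finset.mem_filter] at hw
  exact absurd hw.2.1 hw.2.2

lemma lstar_parent {i v : Fin T.n} (h : T.Anc v i) (hv : v ≠ T.root) (ℓ : Fin T.n → ℝ) :
    T.lstar ℓ i (T.parent v) = T.lstar ℓ i v + ((T.Ldesc v).card : ℝ) * ℓ v := by
  have hpi : T.Anc (T.parent v) i := T.anc_trans ⟨1, rfl⟩ h
  rw [T.lstar_filter h, T.lstar_filter hpi]
  have hset : Finset.univ.filter (fun w => T.Anc w i ∧ ¬ T.Anc w (T.parent v))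
      = insert v (Finset.univ.filter (fun w => T.Anc w i ∧ ¬ T.Anc w v)) := by
    ext w
    simp only [Finset.mem_filter, Finset.mem_univ, true_and, Finset.mem_insert]
    constructor
    · rintro ⟨hwi, hwp⟩
      by_cases hwv : T.Anc w v
      · left
        by_contra hne
        exact hwp (T.anc_parent_of_anc_ne hwv hne)
      · right; exact ⟨hwi, hwv⟩
    · rintro (rfl | ⟨hwi, hwv⟩)
      · exact ⟨h, T.not_anc_parent hv⟩
      · exact ⟨hwi, fun hc => hwv (T.anc_trans hc ⟨1, rfl⟩)⟩
  rw [hset, Finset.sum_insert (by simp [T.anc_refl]), add_comm]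

lemma internal_parent {v : Fin T.n} (hv : v ≠ T.root) : ¬ T.IsLeaf (T.parent v) := by
  rw [not_isLeaf_iff]
  exact ⟨v, T.mem_children_iff.mpr ⟨rfl, hv⟩⟩

/-- The key telescoping computation. -/
lemma lstar_ell (f : Fin T.n → ℝ) :
    ∀ (k : ℕ) (i v : Fin T.n), i ∈ T.leaves → ¬ T.IsLeaf v → T.parent^[k] i = v →
      T.lstar (T.ell f) i v = f v := by
  intro k
  induction k with
  | zero =>
    intro i v hi hv h
    simp only [Function.iterate_zero, id] at h
    exact absurd (T.mem_leaves_iff.mp hi) (h ▸ hv)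
  | succ k ih =>
    intro i v hi hv h
    set u := T.parent^[k] i with hu
    have hpu : T.parent u = v := by
      rw [hu, ← Function.iterate_succ_apply' T.parent k i]; exact h
    by_cases hur : u = T.root
    · -- then v = root = u, use ih
      have hvr : v = T.root := by rw [← hpu, hur, T.parent_root]
      exact ih i v hi hv (by rw [← hu, hur, hvr])
    · have hanc : T.Anc u i := ⟨k, hu.symm⟩
      have hrec := T.lstar_parent hanc hur (T.ell f)
      rw [hpu] at hrec
      rw [hrec]
      by_cases hul : T.IsLeaf u
      · -- u is a leaf, so u = i
        have hui : i = u := T.isLeaf_anc hul hanc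
        have hcard : (T.Ldesc u).card = 1 := by
          have : T.Ldesc u = {u} := by
            ext j
            rw [mem_Ldesc_iff]
            constructor
            · rintro ⟨-, hj⟩; simp [T.isLeaf_anc hul hj]
            · intro hj
              rw [Finset.mem_singleton] at hj
              subst hj
              exact ⟨T.mem_leaves_iff.mpr hul, T.anc_refl u⟩
          rw [this]; simp
        rw [← hui, T.lstar_self, hui, hcard]
        simp [ell, hur, hul, hpu]
      · -- u is internal: telescope
        have hlu := ih i u hi hul (by rw [hu])
        have hcard : (0 : ℝ) < (T.Ldesc u).card := by
          exact_mod_cast T.card_Ldesc_pos u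
        rw [hlu]
        simp only [ell, if_neg hur, if_neg hul, hpu]
        field_simp
        ring

lemma ell_nonneg (f : Fin T.n → ℝ)
    (hdec : ∀ u ∈ T.internal, ∀ v ∈ T.internal, T.Anc u v → f v ≤ f u)
    (hfringe : ∀ u, (∃ i ∈ T.children u, T.IsLeaf i) → 0 < f u) (v : Fin T.n) :
    0 ≤ T.ell f v := by
  rw [ell]
  split_ifs with h1 h2
  · exact le_refl 0
  · exact le_of_lt (hfringe (T.parent v) ⟨v, T.mem_children_iff.mpr ⟨rfl, h1⟩, h2⟩)
  · apply div_nonneg _ (Nat.cast_nonneg _)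
    rw [sub_nonneg]
    exact hdec (T.parent v) (T.mem_internal_iff.mpr (T.internal_parent h1)) v
      (T.mem_internal_iff.mpr h2) ⟨1, rfl⟩

lemma ell_pos_leaf (f : Fin T.n → ℝ) (hroot : ¬ T.IsLeaf T.root)
    (hfringe : ∀ u, (∃ i ∈ T.children u, T.IsLeaf i) → 0 < f u) (v : Fin T.n)
    (hv : T.IsLeaf v) : 0 < T.ell f v := by
  have hvr : v ≠ T.root := by rintro rfl; exact hroot hv
  rw [ell, if_neg hvr, if_pos hv]
  exact hfringe (T.parent v) ⟨v, T.mem_children_iff.mpr ⟨rfl, hvr⟩, hv⟩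

end RTree

namespace RTree

variable (T : RTree)

/-- a chosen ordered pair of children. -/
def cpair (v : Fin T.n) : Fin T.n × Fin T.n :=
  if h : (T.children v).card = 2 then
    ((Finset.card_eq_two.mp h).choose, (Finset.card_eq_two.mp h).choose_spec.choose)
  else (v, v)

lemma cpair_spec {v : Fin T.n} (h : (T.children v).card = 2) :
    (T.cpair v).1 ≠ (T.cpair v).2 ∧ T.children v = {(T.cpair v).1, (T.cpair v).2} := by
  rw [cpair, dif_pos h]
  exact (Finset.card_eq_two.mp h).choose_spec.choose_spec

/-- The Haar-like wavelet family (extended by junk off the leaves / non-internal vertices). -/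
def psi : Fin T.n → Fin T.n → ℝ := fun v i =>
  if v = T.root then (Real.sqrt (T.leaves.card : ℝ))⁻¹
  else if T.Anc (T.cpair v).1 i then
    Real.sqrt (((T.Ldesc (T.cpair v).2).card : ℝ)
      / (((T.Ldesc (T.cpair v).1).card : ℝ) * ((T.Ldesc v).card : ℝ)))
  else if T.Anc (T.cpair v).2 i then
    - Real.sqrt (((T.Ldesc (T.cpair v).1).card : ℝ)
      / (((T.Ldesc (T.cpair v).2).card : ℝ) * ((T.Ldesc v).card : ℝ)))
  else 0

variable {T}

lemma children_card_two (hT : T.IsORB) {v : Fin T.n} (hv : ¬ T.IsLeaf v) (hvr : v ≠ T.root) :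
    (T.children v).card = 2 := hT.2.2 v hv hvr

lemma c0_mem (h2 : (T.children v).card = 2) : (T.cpair v).1 ∈ T.children v := by
  rw [(T.cpair_spec h2).2]; simp

lemma c1_mem (h2 : (T.children v).card = 2) : (T.cpair v).2 ∈ T.children v := by
  rw [(T.cpair_spec h2).2]; simp

lemma psi_c0 (hvr : v ≠ T.root) {i : Fin T.n} (hi : i ∈ T.Ldesc (T.cpair v).1) :
    T.psi v i = Real.sqrt (((T.Ldesc (T.cpair v).2).card : ℝ)
      / (((T.Ldesc (T.cpair v).1).card : ℝ) * ((T.Ldesc v).card : ℝ))) := by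
  rw [psi, if_neg hvr, if_pos (T.mem_Ldesc_iff.mp hi).2]

lemma psi_c1 (h2 : (T.children v).card = 2) (hvr : v ≠ T.root) {i : Fin T.n}
    (hi : i ∈ T.Ldesc (T.cpair v).2) :
    T.psi v i = - Real.sqrt (((T.Ldesc (T.cpair v).1).card : ℝ)
      / (((T.Ldesc (T.cpair v).2).card : ℝ) * ((T.Ldesc v).card : ℝ))) := by
  have hdisj := T.children_disjoint_Ldesc (c0_mem h2) (c1_mem h2) (T.cpair_spec h2).1
  have h0 : ¬ T.Anc (T.cpair v).1 i := by
    intro h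
    exact (Finset.disjoint_left.mp hdisj)
      (T.mem_Ldesc_iff.mpr ⟨(T.mem_Ldesc_iff.mp hi).1, h⟩) hi
  rw [psi, if_neg hvr, if_neg h0, if_pos (T.mem_Ldesc_iff.mp hi).2]

lemma psi_support (h2 : (T.children v).card = 2) (hvr : v ≠ T.root) {i : Fin T.n}
    (hi : ¬ T.Anc v i) : T.psi v i = 0 := by
  rw [psi, if_neg hvr, if_neg, if_neg]
  · intro h
    exact hi (T.anc_trans (T.anc_of_child (c1_mem h2)) h)
  · intro h
    exact hi (T.anc_trans (T.anc_of_child (c0_mem h2)) h)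

lemma psi_root (i : Fin T.n) : T.psi T.root i = (Real.sqrt (T.leaves.card : ℝ))⁻¹ := by
  rw [psi, if_pos rfl]

lemma sqrt_key {x y : ℝ} (hx : 0 < x) (hy : 0 < y) :
    x * Real.sqrt (y / (x * (x + y))) = Real.sqrt (x * y / (x + y)) := by
  have hxy : 0 < x + y := by linarith
  rw [show x * Real.sqrt (y / (x * (x + y)))
      = Real.sqrt (x ^ 2) * Real.sqrt (y / (x * (x + y))) by rw [Real.sqrt_sq hx.le],
    ← Real.sqrt_mul (sq_nonneg x)]
  congr 1
  field_simp

lemma cards_pos (hT : T.IsORB) {v : Fin T.n} (hv : ¬ T.IsLeaf v) (hvr : v ≠ T.root) :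
    (0:ℝ) < ((T.Ldesc (T.cpair v).1).card : ℝ) ∧ (0:ℝ) < ((T.Ldesc (T.cpair v).2).card : ℝ) ∧
    ((T.Ldesc v).card : ℝ) = ((T.Ldesc (T.cpair v).1).card : ℝ)
      + ((T.Ldesc (T.cpair v).2).card : ℝ) := by
  have h2 := children_card_two hT hv hvr
  refine ⟨by exact_mod_cast T.card_Ldesc_pos _, by exact_mod_cast T.card_Ldesc_pos _, ?_⟩
  have := T.card_Ldesc_add hv (T.cpair_spec h2).1 (T.cpair_spec h2).2
  exact_mod_cast this

lemma psi_sum_self (hT : T.IsORB) {v : Fin T.n} (hv : ¬ T.IsLeaf v) (hvr : v ≠ T.root) :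
    ∑ i ∈ T.Ldesc v, T.psi v i = 0 := by
  have h2 := children_card_two hT hv hvr
  obtain ⟨hx, hy, hxy⟩ := cards_pos hT hv hvr
  set x := ((T.Ldesc (T.cpair v).1).card : ℝ)
  set y := ((T.Ldesc (T.cpair v).2).card : ℝ)
  rw [T.Ldesc_eq_union hv (T.cpair_spec h2).2,
    Finset.sum_union (T.children_disjoint_Ldesc (c0_mem h2) (c1_mem h2) (T.cpair_spec h2).1)]
  rw [Finset.sum_congr rfl (fun i hi => psi_c0 hvr hi),
    Finset.sum_congr rfl (fun i hi => psi_c1 h2 hvr hi)]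
  rw [Finset.sum_const, Finset.sum_const, nsmul_eq_mul, nsmul_eq_mul, hxy]
  have k1 := sqrt_key hx hy
  have k2 := sqrt_key hy hx
  rw [add_comm y x, mul_comm y x] at k2
  rw [mul_neg, k1, k2]
  ring

lemma psi_sq_sum (hT : T.IsORB) {v : Fin T.n} (hv : ¬ T.IsLeaf v) (hvr : v ≠ T.root) :
    ∑ i ∈ T.Ldesc v, (T.psi v i) ^ 2 = 1 := by
  have h2 := children_card_two hT hv hvr
  obtain ⟨hx, hy, hxy⟩ := cards_pos hT hv hvr
  set x := ((T.Ldesc (T.cpair v).1).card : ℝ)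
  set y := ((T.Ldesc (T.cpair v).2).card : ℝ)
  rw [T.Ldesc_eq_union hv (T.cpair_spec h2).2,
    Finset.sum_union (T.children_disjoint_Ldesc (c0_mem h2) (c1_mem h2) (T.cpair_spec h2).1)]
  have hm : ((T.Ldesc v).card : ℝ) = x + y := hxy
  have e0 : ∀ i ∈ T.Ldesc (T.cpair v).1, (T.psi v i) ^ 2 = y / (x * (x + y)) := by
    intro i hi
    rw [psi_c0 hvr hi, Real.sq_sqrt (by positivity), hm]
  have e1 : ∀ i ∈ T.Ldesc (T.cpair v).2, (T.psi v i) ^ 2 = x / (y * (x + y)) := by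
    intro i hi
    rw [psi_c1 h2 hvr hi, neg_pow, Real.sq_sqrt (by positivity), hm]
    ring
  rw [Finset.sum_congr rfl e0, Finset.sum_congr rfl e1,
    Finset.sum_const, Finset.sum_const, nsmul_eq_mul, nsmul_eq_mul]
  have hxy0 : x + y ≠ 0 := by positivity
  field_simp
  ring

lemma psi_const_on_child (hT : T.IsORB) {v : Fin T.n} (hv : ¬ T.IsLeaf v) (hvr : v ≠ T.root)
    {c i j : Fin T.n} (hc : c ∈ T.children v)
    (hi : i ∈ T.Ldesc c) (hj : j ∈ T.Ldesc c) : T.psi v i = T.psi v j := by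
  have h2 := children_card_two hT hv hvr
  have hch := (T.cpair_spec h2).2
  rw [hch] at hc
  simp only [Finset.mem_insert, Finset.mem_singleton] at hc
  rcases hc with rfl | rfl
  · rw [psi_c0 hvr hi, psi_c0 hvr hj]
  · rw [psi_c1 h2 hvr hi, psi_c1 h2 hvr hj]

/-- sum of the wavelet over the leaves of any ancestor of `v` vanishes. -/
lemma psi_sum_anc (hT : T.IsORB) {v : Fin T.n} (hv : ¬ T.IsLeaf v) (hvr : v ≠ T.root)
    {w : Fin T.n} (hw : T.Anc w v) : ∑ i ∈ T.Ldesc w, T.psi v i = 0 := by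
  have h2 := children_card_two hT hv hvr
  rw [← Finset.sum_filter_add_sum_filter_not (T.Ldesc w) (fun i => T.Anc v i)]
  have h1 : (T.Ldesc w).filter (fun i => T.Anc v i) = T.Ldesc v := by
    ext i
    simp only [Finset.mem_filter, mem_Ldesc_iff]
    constructor
    · rintro ⟨⟨ha, -⟩, hb⟩; exact ⟨ha, hb⟩
    · rintro ⟨ha, hb⟩; exact ⟨⟨ha, T.anc_trans hw hb⟩, hb⟩
  have hz : ∑ i ∈ (T.Ldesc w).filter (fun i => ¬ T.Anc v i), T.psi v i = 0 :=
    Finset.sum_eq_zero (fun i hi => psi_support h2 hvr (Finset.mem_filter.mp hi).2)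
  rw [h1, hz, psi_sum_self hT hv hvr, add_zero]

lemma Ldesc_root : T.Ldesc T.root = T.leaves := by
  ext i; simp [mem_Ldesc_iff, T.anc_root]

lemma psi_sum_leaves (hT : T.IsORB) {v : Fin T.n} (hv : ¬ T.IsLeaf v) (hvr : v ≠ T.root) :
    ∑ i ∈ T.leaves, T.psi v i = 0 := by
  rw [← Ldesc_root]; exact psi_sum_anc hT hv hvr (T.anc_root v)

/-- sum of the wavelet over the leaves of a strict descendant is `card • value`. -/
lemma psi_sum_desc (hT : T.IsORB) {v : Fin T.n} (hv : ¬ T.IsLeaf v) (hvr : v ≠ T.root)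
    {w j : Fin T.n} (hw : T.Anc v w) (hwv : w ≠ v) (hj : j ∈ T.Ldesc w) :
    ∑ i ∈ T.Ldesc w, T.psi v i = ((T.Ldesc w).card : ℝ) * T.psi v j := by
  obtain ⟨c, hc, hcw⟩ := T.anc_step hw hwv
  have hsub : T.Ldesc w ⊆ T.Ldesc c := T.Ldesc_subset hcw
  rw [Finset.sum_congr rfl (fun i hi =>
    psi_const_on_child hT hv hvr hc (hsub hi) (hsub hj))]
  rw [Finset.sum_const, nsmul_eq_mul]

lemma leaves_card_pos : 0 < T.leaves.card := by
  obtain ⟨i, hi, -⟩ := T.exists_leaf_desc T.root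
  exact Finset.card_pos.mpr ⟨i, hi⟩

lemma psi_orth_of_anc (hT : T.IsORB) {u v : Fin T.n} (hu : ¬ T.IsLeaf u) (hv : ¬ T.IsLeaf v)
    (hanc : T.Anc u v) (hne : u ≠ v) :
    ∑ i ∈ T.leaves, T.psi u i * T.psi v i = 0 := by
  have hvr : v ≠ T.root := by
    rintro rfl
    exact hne (T.eq_root_of_anc hanc)
  have h2v := children_card_two hT hv hvr
  rw [← Finset.sum_filter_add_sum_filter_not T.leaves (fun i => T.Anc v i)]
  have h1 : T.leaves.filter (fun i => T.Anc v i) = T.Ldesc v := rfl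
  have hz : ∑ i ∈ T.leaves.filter (fun i => ¬ T.Anc v i), T.psi u i * T.psi v i = 0 :=
    Finset.sum_eq_zero (fun i hi => by
      rw [psi_support h2v hvr (Finset.mem_filter.mp hi).2, mul_zero])
  rw [h1, hz, add_zero]
  by_cases hur : u = T.root
  · subst hur
    rw [Finset.sum_congr rfl (fun i _ => by rw [psi_root]),
      ← Finset.mul_sum, psi_sum_self hT hv hvr, mul_zero]
  · obtain ⟨c, hc, hcv⟩ := T.anc_step hanc (fun h => hne h.symm)
    have hsub : T.Ldesc v ⊆ T.Ldesc c := T.Ldesc_subset hcv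
    obtain ⟨j, hj⟩ := T.Ldesc_nonempty v
    rw [Finset.sum_congr rfl (fun i hi => by
      rw [psi_const_on_child hT hu hur hc (hsub hi) (hsub hj)]),
      ← Finset.mul_sum, psi_sum_self hT hv hvr, mul_zero]

lemma psi_orthonormal (hT : T.IsORB) {u v : Fin T.n} (hu : ¬ T.IsLeaf u) (hv : ¬ T.IsLeaf v) :
    ∑ i ∈ T.leaves, T.psi u i * T.psi v i = if u = v then 1 else 0 := by
  by_cases huv : u = v
  · subst huv
    rw [if_pos rfl]
    by_cases hur : u = T.root
    · subst hur
      rw [Finset.sum_congr rfl (fun i _ => by rw [psi_root, ← pow_two]),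
        Finset.sum_const, nsmul_eq_mul]
      have hL : (0:ℝ) < (T.leaves.card : ℝ) := by
        exact_mod_cast leaves_card_pos (T := T)
      rw [← Real.sqrt_inv, Real.sq_sqrt (by positivity)]
      field_simp
    · have h2 := children_card_two hT hu hur
      rw [← Finset.sum_filter_add_sum_filter_not T.leaves (fun i => T.Anc u i)]
      have h1 : T.leaves.filter (fun i => T.Anc u i) = T.Ldesc u := rfl
      have hz : ∑ i ∈ T.leaves.filter (fun i => ¬ T.Anc u i), T.psi u i * T.psi u i = 0 :=
        Finset.sum_eq_zero (fun i hi => by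
          rw [psi_support h2 hur (Finset.mem_filter.mp hi).2, mul_zero])
      rw [h1, hz, add_zero, Finset.sum_congr rfl (fun i _ => (pow_two _).symm)]
      exact psi_sq_sum hT hu hur
  · rw [if_neg huv]
    by_cases h1 : T.Anc u v
    · exact psi_orth_of_anc hT hu hv h1 huv
    by_cases h2 : T.Anc v u
    · rw [Finset.sum_congr rfl (fun i _ => mul_comm _ _)]
      exact psi_orth_of_anc hT hv hu h2 (Ne.symm huv)
    · apply Finset.sum_eq_zero
      intro i hi
      have hur : u ≠ T.root := by rintro rfl; exact h1 (T.anc_root v)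
      have hvr : v ≠ T.root := by rintro rfl; exact h2 (T.anc_root u)
      by_cases hui : T.Anc u i
      · by_cases hvi : T.Anc v i
        · rcases T.anc_comparable hui hvi with h | h
          · exact absurd h h1
          · exact absurd h h2
        · rw [psi_support (children_card_two hT hv hvr) hvr hvi, mul_zero]
      · rw [psi_support (children_card_two hT hu hur) hur hui, zero_mul]

end RTree

namespace RTree

variable {T : RTree}

lemma lstar_eq_f (f : Fin T.n → ℝ) {v i : Fin T.n} (hv : ¬ T.IsLeaf v)
    (hi : i ∈ T.Ldesc v) : T.lstar (T.ell f) i v = f v := by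
  obtain ⟨hil, k, hk⟩ := T.mem_Ldesc_iff.mp hi
  exact T.lstar_ell f k i v hil hv hk

lemma cov_apply (ℓ : Fin T.n → ℝ) (i j : T.Leaf) :
    T.cov ℓ i j = ∑ w ∈ Finset.univ.filter (fun w => w ≠ T.root),
      ℓ w * (T.delta w i * T.delta w j) := by
  rw [cov]
  rw [Matrix.sum_apply, Finset.sum_congr rfl]
  intro w _
  rw [Matrix.smul_apply, Matrix.vecMulVec_apply, smul_eq_mul]

lemma delta_sum (w : Fin T.n) (g : Fin T.n → ℝ) :
    ∑ j : T.Leaf, T.delta w j * g j.1 = ∑ j ∈ T.Ldesc w, g j := by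
  have h1 : ∑ j ∈ T.Ldesc w, g j = ∑ j ∈ T.leaves, if T.Anc w j then g j else 0 := by
    rw [Ldesc, Finset.sum_filter]
  have h2 : ∑ j : T.Leaf, T.delta w j * g j.1
      = ∑ j : T.leaves, (fun x => (if T.Anc w x then g x else 0)) j.1 := by
    apply Finset.sum_congr rfl
    intro j _
    rw [delta]
    split_ifs with h <;> simp [h]
  rw [h1, h2, Finset.sum_coe_sort T.leaves (fun x => if T.Anc w x then g x else 0)]

lemma cov_mulVec_psi (hT : T.IsORB) (f : Fin T.n → ℝ) {v : Fin T.n} (hv : ¬ T.IsLeaf v)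
    (i : T.Leaf) :
    ∑ j : T.Leaf, T.cov (T.ell f) i j * T.psi v j.1 = f v * T.psi v i.1 := by
  classical
  set ℓ := T.ell f with hℓ
  have hexp : ∑ j : T.Leaf, T.cov ℓ i j * T.psi v j.1
      = ∑ w ∈ Finset.univ.filter (fun w => w ≠ T.root),
          ℓ w * (T.delta w i * ∑ j ∈ T.Ldesc w, T.psi v j) := by
    rw [Finset.sum_congr rfl (fun j _ => by rw [cov_apply ℓ i j, Finset.sum_mul]),
      Finset.sum_comm]
    apply Finset.sum_congr rfl
    intro w _
    rw [← delta_sum w (T.psi v), Finset.mul_sum, Finset.mul_sum]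
    apply Finset.sum_congr rfl
    intro j _
    ring
  rw [hexp]
  have hileaf : i.1 ∈ T.leaves := i.2
  by_cases hvr : v = T.root
  · -- root case
    subst hvr
    have hK : ∀ j : Fin T.n, T.psi T.root j = (Real.sqrt (T.leaves.card : ℝ))⁻¹ := psi_root
    set K := (Real.sqrt (T.leaves.card : ℝ))⁻¹
    have step : ∀ w ∈ Finset.univ.filter (fun w => w ≠ T.root),
        ℓ w * (T.delta w i * ∑ j ∈ T.Ldesc w, T.psi T.root j)
        = (if T.Anc w i.1 ∧ ¬ T.Anc w T.root then ((T.Ldesc w).card : ℝ) * ℓ w else 0) * K := by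
      intro w hw
      rw [Finset.mem_filter] at hw
      have hnr : ¬ T.Anc w T.root := fun h => hw.2 (T.eq_root_of_anc h)
      rw [Finset.sum_congr rfl (fun j _ => hK j), Finset.sum_const, nsmul_eq_mul, delta]
      by_cases ha : T.Anc w i.1
      · rw [if_pos ha, if_pos ⟨ha, hnr⟩]; ring
      · rw [if_neg ha, if_neg (fun hc => ha hc.1)]; ring
    rw [Finset.sum_congr rfl step, ← Finset.sum_mul, ← Finset.sum_filter,
      Finset.filter_filter]
    have hset : Finset.univ.filter (fun w => w ≠ T.root ∧ (T.Anc w i.1 ∧ ¬ T.Anc w T.root))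
        = Finset.univ.filter (fun w => T.Anc w i.1 ∧ ¬ T.Anc w T.root) := by
      ext w
      simp only [Finset.mem_filter, Finset.mem_univ, true_and]
      exact ⟨fun h => h.2, fun h => ⟨fun hr => h.2 (hr ▸ T.anc_refl w), h⟩⟩
    rw [hset, ← T.lstar_filter (T.anc_root i.1) ℓ]
    rw [lstar_eq_f f hv (T.mem_Ldesc_iff.mpr ⟨hileaf, T.anc_root i.1⟩), hK i.1]
  · -- non-root case
    have h2 := children_card_two hT hv hvr
    by_cases hvi : T.Anc v i.1
    · -- i descends from v
      have step : ∀ w ∈ Finset.univ.filter (fun w => w ≠ T.root),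
          ℓ w * (T.delta w i * ∑ j ∈ T.Ldesc w, T.psi v j)
          = (if T.Anc w i.1 ∧ ¬ T.Anc w v then ((T.Ldesc w).card : ℝ) * ℓ w else 0)
              * T.psi v i.1 := by
        intro w hw
        rw [delta]
        by_cases ha : T.Anc w i.1
        · by_cases hb : T.Anc w v
          · rw [psi_sum_anc hT hv hvr hb, if_pos ha, if_neg (fun hc => hc.2 hb)]; ring
          · have hcomp := T.anc_comparable ha hvi
            have hvw : T.Anc v w := by
              rcases hcomp with h | h
              · exact absurd h hb
              · exact h
            have hwv : w ≠ v := fun h => hb (h ▸ T.anc_refl w)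
            rw [psi_sum_desc hT hv hvr hvw hwv (T.mem_Ldesc_iff.mpr ⟨hileaf, ha⟩),
              if_pos ha, if_pos ⟨ha, hb⟩]
            ring
        · rw [if_neg ha, if_neg (fun hc => ha hc.1)]; ring
      rw [Finset.sum_congr rfl step, ← Finset.sum_mul, ← Finset.sum_filter,
        Finset.filter_filter]
      have hset : Finset.univ.filter (fun w => w ≠ T.root ∧ (T.Anc w i.1 ∧ ¬ T.Anc w v))
          = Finset.univ.filter (fun w => T.Anc w i.1 ∧ ¬ T.Anc w v) := by
        ext w
        simp only [Finset.mem_filter, Finset.mem_univ, true_and]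
        refine ⟨fun h => h.2, fun h => ⟨?_, h⟩⟩
        rintro rfl
        exact h.2 (T.anc_root v)
      rw [hset, ← T.lstar_filter hvi ℓ,
        lstar_eq_f f hv (T.mem_Ldesc_iff.mpr ⟨hileaf, hvi⟩)]
    · -- i does not descend from v: both sides vanish
      rw [psi_support h2 hvr hvi, mul_zero]
      apply Finset.sum_eq_zero
      intro w hw
      rw [delta]
      by_cases ha : T.Anc w i.1
      · by_cases hb : T.Anc w v
        · rw [psi_sum_anc hT hv hvr hb]; ring
        · by_cases hc : T.Anc v w
          · exact absurd (T.anc_trans hc ha) hvi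
          · have hz : ∑ j ∈ T.Ldesc w, T.psi v j = 0 := by
              apply Finset.sum_eq_zero
              intro j hj
              apply psi_support h2 hvr
              intro hvj
              rcases T.anc_comparable (T.mem_Ldesc_iff.mp hj).2 hvj with h | h
              · exact hb h
              · exact hc h
            rw [hz]; ring
      · rw [if_neg ha]; ring

end RTree

open Polynomial Matrix in
lemma charmatrix_diagonal {m : Type*} [Fintype m] [DecidableEq m] (d : m → ℝ) :
    Matrix.charmatrix (Matrix.diagonal d) = Matrix.diagonal (fun i => (X : ℝ[X]) - C (d i)) := by
  apply Matrix.ext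
  intro i j
  by_cases h : i = j
  · subst h
    simp
  · rw [Matrix.charmatrix_apply_ne _ _ _ h, Matrix.diagonal_apply_ne _ h,
      Matrix.diagonal_apply_ne _ h, map_zero, neg_zero]

open Polynomial Matrix in
lemma charpoly_diagonal {m : Type*} [Fintype m] [DecidableEq m] (d : m → ℝ) :
    (Matrix.diagonal d).charpoly = ∏ i : m, ((X : ℝ[X]) - C (d i)) := by
  rw [Matrix.charpoly, _root_.charmatrix_diagonal, Matrix.det_diagonal]

open Polynomial Matrix in
lemma charpoly_orth_conj {m : Type*} [Fintype m] [DecidableEq m] (V A : Matrix m m ℝ)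
    (h1 : V * Vᵀ = 1) (h2 : Vᵀ * V = 1) : (Vᵀ * A * V).charpoly = A.charpoly := by
  have hc := (Matrix.scalar_commute (X : ℝ[X]) (fun r' => Commute.all _ _)
    ((C : ℝ →+* ℝ[X]).mapMatrix Vᵀ)).eq
  have key : (C : ℝ →+* ℝ[X]).mapMatrix Vᵀ * Matrix.charmatrix A * (C : ℝ →+* ℝ[X]).mapMatrix V
      = Matrix.charmatrix (Vᵀ * A * V) := by
    rw [Matrix.charmatrix, Matrix.charmatrix, mul_sub, sub_mul]
    congr 1
    · rw [← hc, mul_assoc, ← _root_.map_mul, h2, _root_.map_one, mul_one]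
    · rw [← _root_.map_mul, ← _root_.map_mul]
  rw [Matrix.charpoly, Matrix.charpoly, ← key, Matrix.det_mul, Matrix.det_mul]
  have hdet : ((C : ℝ →+* ℝ[X]).mapMatrix Vᵀ).det * ((C : ℝ →+* ℝ[X]).mapMatrix V).det = 1 := by
    rw [mul_comm, ← Matrix.det_mul, ← _root_.map_mul, h1, _root_.map_one, Matrix.det_one]
  calc ((C : ℝ →+* ℝ[X]).mapMatrix Vᵀ).det * (Matrix.charmatrix A).det
        * ((C : ℝ →+* ℝ[X]).mapMatrix V).det
      = (((C : ℝ →+* ℝ[X]).mapMatrix Vᵀ).det * ((C : ℝ →+* ℝ[X]).mapMatrix V).det)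
        * (Matrix.charmatrix A).det := by ring
    _ = (Matrix.charmatrix A).det := by rw [hdet, one_mul]

open Matrix Polynomial

/-- Given an ORB-tree topology and `f : I → [0,∞)` decreasing along ancestry and
strictly positive at parents of leaves, there are branch lengths `ℓ` (nonnegative,
positive on leaf-adjacent edges) making the tree trace-balanced with
`ℓ*(v,i) = f(v)` for all `v ∈ I`, `i ∈ L(v)`; consequently `σ(S) = f(I)` with the
multiplicity of `λ` equal to `|f⁻¹({λ})|`. -/
theorem exists_branchLengths_of_decreasing (T : RTree) (hT : T.IsORB)
    (f : Fin T.n → ℝ) (hf0 : ∀ v ∈ T.internal, 0 ≤ f v)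
    (hdec : ∀ u ∈ T.internal, ∀ v ∈ T.internal, T.Anc u v → f v ≤ f u)
    (hfringe : ∀ u, (∃ i ∈ T.children u, T.IsLeaf i) → 0 < f u) :
    ∃ ℓ : Fin T.n → ℝ, (∀ v, 0 ≤ ℓ v) ∧ (∀ v, T.IsLeaf v → 0 < ℓ v) ∧
      (∀ v ∈ T.internal, ∀ i ∈ T.Ldesc v, T.lstar ℓ i v = f v) ∧
      spectrum ℝ (T.cov ℓ) = f '' {v | v ∈ T.internal} ∧
      (T.cov ℓ).charpoly
        = ∏ v ∈ T.internal, (Polynomial.X - Polynomial.C (f v)) := by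
  classical
  set ℓ := T.ell f with hℓdef
  -- the index equivalence
  have hcard : Fintype.card {v // v ∈ T.internal} = Fintype.card T.Leaf := by
    rw [Fintype.card_coe, Fintype.card_coe, T.card_internal_eq hT]
  set e : {v // v ∈ T.internal} ≃ T.Leaf := Fintype.equivOfCardEq hcard with he
  have hint : ∀ v : {v // v ∈ T.internal}, ¬ T.IsLeaf v.1 :=
    fun v => T.mem_internal_iff.mp v.2
  -- the wavelet matrix
  set W : Matrix {v // v ∈ T.internal} T.Leaf ℝ :=
    Matrix.of (fun v i => T.psi v.1 i.1) with hW
  set D : Matrix {v // v ∈ T.internal} {v // v ∈ T.internal} ℝ :=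
    Matrix.diagonal (fun v => f v.1) with hD
  have hWWt : W * Wᵀ = 1 := by
    apply Matrix.ext
    intro u v
    rw [Matrix.mul_apply]
    have hsum : ∑ j : T.Leaf, W u j * Wᵀ j v
        = ∑ j : T.leaves, (fun x => T.psi u.1 x * T.psi v.1 x) j.1 := by
      apply Finset.sum_congr rfl
      intro j _
      rfl
    rw [hsum, Finset.sum_coe_sort T.leaves (fun x => T.psi u.1 x * T.psi v.1 x),
      RTree.psi_orthonormal hT (hint u) (hint v), Matrix.one_apply]
    by_cases h : u = v
    · rw [if_pos h, if_pos (congrArg _ h)]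
    · rw [if_neg h, if_neg (fun hc => h (Subtype.ext hc))]
  have hCW : T.cov ℓ * Wᵀ = Wᵀ * D := by
    apply Matrix.ext
    intro i v
    rw [Matrix.mul_apply, hD, Matrix.mul_diagonal]
    have : ∑ j : T.Leaf, T.cov ℓ i j * Wᵀ j v
        = ∑ j : T.Leaf, T.cov (T.ell f) i j * T.psi v.1 j.1 := by
      apply Finset.sum_congr rfl
      intro j _
      rfl
    rw [this, RTree.cov_mulVec_psi hT f (hint v) i]
    show f v.1 * T.psi v.1 i.1 = T.psi v.1 i.1 * f v.1
    ring
  -- square versions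
  set V : Matrix T.Leaf T.Leaf ℝ := W.submatrix e.symm id with hV
  set D' : Matrix T.Leaf T.Leaf ℝ := Matrix.diagonal (fun i => f (e.symm i).1) with hD'
  have hD'sub : D.submatrix e.symm e.symm = D' := by
    apply Matrix.ext
    intro i j
    rw [Matrix.submatrix_apply, hD, hD']
    by_cases h : i = j
    · subst h; rw [Matrix.diagonal_apply_eq, Matrix.diagonal_apply_eq]
    · rw [Matrix.diagonal_apply_ne _ (fun hc => h (by
        have := congrArg e hc; simpa using this)), Matrix.diagonal_apply_ne _ h]
  have hVVt : V * Vᵀ = 1 := by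
    rw [hV, Matrix.transpose_submatrix]
    have := Matrix.submatrix_mul_equiv W Wᵀ e.symm (Equiv.refl T.Leaf) e.symm
    simp only [Equiv.coe_refl] at this
    rw [this, hWWt, Matrix.submatrix_one_equiv]
  have hVtV : Vᵀ * V = 1 := mul_eq_one_comm.mp hVVt
  have hcov : T.cov ℓ = Vᵀ * D' * V := by
    have h1 : T.cov ℓ * Vᵀ = Vᵀ * D' := by
      rw [hV, Matrix.transpose_submatrix]
      have e1 := Matrix.submatrix_mul_equiv (T.cov ℓ) Wᵀ (id : T.Leaf → T.Leaf)
        (Equiv.refl T.Leaf) e.symm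
      simp only [Equiv.coe_refl] at e1
      rw [Matrix.submatrix_id_id] at e1
      have e2 := Matrix.submatrix_mul_equiv Wᵀ D (id : T.Leaf → T.Leaf) e.symm e.symm
      rw [← hD'sub, e1, e2, hCW]
    calc T.cov ℓ = T.cov ℓ * (Vᵀ * V) := by rw [hVtV, mul_one]
      _ = (T.cov ℓ * Vᵀ) * V := by rw [mul_assoc]
      _ = Vᵀ * D' * V := by rw [h1]
  refine ⟨ℓ, fun v => T.ell_nonneg f hdec hfringe v,
    fun v hv => T.ell_pos_leaf f hT.1 hfringe v hv, ?_, ?_, ?_⟩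
  · intro v hv i hi
    exact RTree.lstar_eq_f f (T.mem_internal_iff.mp hv) hi
  · -- spectrum
    set u : (Matrix T.Leaf T.Leaf ℝ)ˣ := ⟨Vᵀ, V, hVtV, hVVt⟩ with hu
    have hconj : T.cov ℓ
        = (u : Matrix T.Leaf T.Leaf ℝ) * D' * ((u⁻¹ : (Matrix T.Leaf T.Leaf ℝ)ˣ) :
            Matrix T.Leaf T.Leaf ℝ) := hcov
    rw [hconj, spectrum.units_conjugate, hD', spectrum_diagonal]
    ext μ
    simp only [Set.mem_range, Set.mem_image, Set.mem_setOf_eq]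
    constructor
    · rintro ⟨i, rfl⟩
      exact ⟨(e.symm i).1, (e.symm i).2, rfl⟩
    · rintro ⟨v, hv, rfl⟩
      exact ⟨e ⟨v, hv⟩, by simp⟩
  · -- characteristic polynomial
    rw [hcov, charpoly_orth_conj V D' hVVt hVtV, hD', _root_.charpoly_diagonal,
      ← Finset.prod_coe_sort T.internal (fun v => (X : ℝ[X]) - C (f v))]
    exact Equiv.prod_comp e.symm (fun v : {v // v ∈ T.internal} => (X : ℝ[X]) - C (f v.1))
end
end
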